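/- arXiv:math/0503251 — 2 statements merged into one kernel-verified Lean document; each statement's English description precedes it below -/
import Mathlib

section
/- Let d ≥ 1, D ≥ 1, and let (A_n)_{n≥1} be rotor-router aggregation in ℤ^d built from any configuration of rotor stacks with discrepancy at most D, and let T_n be the total number of steps taken by the first n particles. Then for all n ≥ 1, ψ(A_n) ≤ T_n + 8√d · D · ∑_{x ∈ A_n} ‖x‖ + 4 d D n. -/
open scoped BigOperators Pointwise symmDiff
open MeasureTheory Filter

noncomputable section
open scoped Classical
namespace RotorRouterPaper

/-- Sites of the lattice `ℤ^d`. -/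
abbrev Site (d : ℕ) := Fin d → ℤ

/-- The `i`-th standard basis vector of `ℤ^d`. -/
def unitVec (d : ℕ) (i : Fin d) : Site d := fun j => if j = i then 1 else 0

/-- Squared Euclidean norm of a lattice point. -/
def nsq {d : ℕ} (x : Site d) : ℝ := ∑ i, ((x i : ℝ)) ^ 2

/-- Euclidean norm of a lattice point. -/
def enorm {d : ℕ} (x : Site d) : ℝ := Real.sqrt (nsq x)

/-- Adjacency `x ∼ y`: Euclidean distance one. -/
def Adj {d : ℕ} (x y : Site d) : Prop := nsq (x - y) = 1

/-- `ω_d`, the Lebesgue volume of the unit ball in `ℝ^d`. -/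
def ballVol (d : ℕ) : ℝ := (volume (Metric.ball (0 : EuclideanSpace ℝ (Fin d)) 1)).toReal

/-- The lattice ball `B_n = {y ∈ ℤ^d : ω_d ‖y‖^d < n}`. -/
def lball (d n : ℕ) : Set (Site d) := {y | ballVol d * enorm y ^ d < (n : ℝ)}

/-- Characterization of the expected exit time function of a (finite) region `A ⊆ ℤ^d`:
it vanishes off `A` and its discrete Laplacian is `-1` on `A`. -/
def IsExitFun (d : ℕ) (A : Set (Site d)) (e : Site d → ℝ) : Prop :=
  (∀ x, x ∉ A → e x = 0) ∧
  ∀ x ∈ A, (1 / (2 * (d : ℝ))) * (∑ i, (e (x + unitVec d i) + e (x - unitVec d i))) - e x = -1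

/-- The expected exit time function `x ↦ e_x(A)` (the unique function satisfying
`IsExitFun` when `A` is finite). -/
def exitFun (d : ℕ) (A : Set (Site d)) : Site d → ℝ :=
  if h : ∃ e, IsExitFun d A e then h.choose else 0

/-- `ē(A) = sup_x e_x(A)`. -/
def ebar (d : ℕ) (A : Set (Site d)) : ℝ := sSup (Set.range (exitFun d A))

/-- `φ(n) = sup {ē(A) - e_o(B_n) : A ⊆ ℤ^d, |A| = n}`. -/
def phi (d n : ℕ) : ℝ :=
  sSup {t | ∃ A : Set (Site d), A.Finite ∧ A.ncard = n ∧ t = ebar d A - exitFun d (lball d n) 0}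

/-- `Φ(n) = ∑_{j=1}^n φ(j)`. -/
def PhiSum (d n : ℕ) : ℝ := ∑ j ∈ Finset.Icc 1 n, phi d j

/-- `ψ(A) = ∑_{x ∈ A} ‖x‖²`. -/
def psi {d : ℕ} (A : Set (Site d)) : ℝ := ∑ᶠ x ∈ A, nsq x

/-- A cardinal direction in `ℤ^d`: one of `±e_1, …, ±e_d`. -/
abbrev Dir (d : ℕ) := Fin d × Bool

/-- The lattice step vector of a cardinal direction. -/
def dirVec (d : ℕ) (ε : Dir d) : Site d := if ε.2 then unitVec d ε.1 else -unitVec d ε.1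

/-- A configuration of rotor stacks `r` (with `r x i` the direction used for the
`(i+1)`-st visit to `x`) has discrepancy at most `D` if for every site, direction and `m ≥ 1`,
among the first `m` rotors of the stack each direction occurs `m/(2d)` times up to error `D`. -/
def HasDiscrepancy (d : ℕ) (D : ℝ) (r : Site d → ℕ → Dir d) : Prop :=
  ∀ (x : Site d) (ε : Dir d) (m : ℕ), 1 ≤ m →
    |(({i | i < m ∧ r x i = ε} : Set ℕ).ncard : ℝ) - (m : ℝ) / (2 * (d : ℝ))| ≤ D

/-- One step of rotor-router walk on a state (current position, visit counts so far):
the particle at `p` being visited for the `(c p + 1)`-st time moves in direction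
`r p (c p)` and the visit count at `p` increases by one. -/
def rstep {d : ℕ} (r : Site d → ℕ → Dir d) (s : Site d × (Site d → ℕ)) :
    Site d × (Site d → ℕ) :=
  (s.1 + dirVec d (r s.1 (s.2 s.1)), Function.update s.2 s.1 (s.2 s.1 + 1))

/-- The state after `t` steps of rotor-router walk started at the origin with visit counts `c`. -/
def walkState {d : ℕ} (r : Site d → ℕ → Dir d) (c : Site d → ℕ) (t : ℕ) :
    Site d × (Site d → ℕ) :=
  (rstep r)^[t] (0, c)

/-- The number of steps until the rotor-router walk started at the origin
(with carried-over visit counts `c`) first leaves the region `A`. -/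
def exitSteps {d : ℕ} (r : Site d → ℕ → Dir d) (A : Set (Site d)) (c : Site d → ℕ) : ℕ :=
  sInf {t | (walkState r c t).1 ∉ A}

/-- The state of rotor-router aggregation after `n` particles have walked and settled:
`(aggState r n).1` is the occupied region `A_{n+1}`, `(aggState r n).2.1` the accumulated
visit counts, and `(aggState r n).2.2` the total number `T_n` of steps taken so far. -/
def aggState {d : ℕ} (r : Site d → ℕ → Dir d) : ℕ → Set (Site d) × (Site d → ℕ) × ℕ
  | 0 => ({0}, fun _ => 0, 0)
  | n + 1 =>
      let s := aggState r n
      let τ := exitSteps r s.1 s.2.1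
      (insert (walkState r s.2.1 τ).1 s.1, (walkState r s.2.1 τ).2, s.2.2 + τ)

/-- The region `A_n` of rotor-router aggregation (for `n ≥ 1`). -/
def aggRegion {d : ℕ} (r : Site d → ℕ → Dir d) (n : ℕ) : Set (Site d) :=
  (aggState r (n - 1)).1

/-- `T_n`, the total number of steps taken by the first `n` particles. -/
def totalSteps {d : ℕ} (r : Site d → ℕ → Dir d) (n : ℕ) : ℕ := (aggState r n).2.2

/-- `A^□ = A + [-1/2,1/2]^d ⊆ ℝ^d`. -/
def box (d : ℕ) (A : Set (Site d)) : Set (EuclideanSpace ℝ (Fin d)) :=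
  {z | ∃ x ∈ A, ∀ i, |z i - (x i : ℝ)| ≤ 1 / 2}

/-- The closed Euclidean ball of unit volume centered at the origin of `ℝ^d`. -/
def unitVolBall (d : ℕ) : Set (EuclideanSpace ℝ (Fin d)) :=
  Metric.closedBall 0 (ballVol d ^ (-(1 : ℝ) / (d : ℝ)))

/-- `A ⊆ ℤ^d` is orthoconvex if every line parallel to a coordinate axis meets `A`
in an interval. -/
def Orthoconvex (d : ℕ) (A : Set (Site d)) : Prop :=
  ∀ x ∈ A, ∀ i : Fin d, ∀ k : ℤ, 0 < k → x + k • unitVec d i ∈ A →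
    ∀ j : ℤ, 0 < j → j < k → x + j • unitVec d i ∈ A

/-- The nonnegative orthant `Q ⊆ ℤ^d`. -/
def orthant (d : ℕ) : Set (Site d) := {x | ∀ i, 0 ≤ x i}

/-- The cube `C(o,r) = {x : ‖x‖_∞ ≤ r}`. -/
def cubeSet (d : ℕ) (r : ℕ) : Set (Site d) := {x | ∀ i, |x i| ≤ (r : ℤ)}

/-- The boundary `∂C(o,r) = {x : ‖x‖_∞ = r + 1 and x ∼ y for some y ∈ C(o,r)}`. -/
def cubeBdry (d : ℕ) (r : ℕ) : Set (Site d) :=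
  {x | (∀ i, |x i| ≤ (r : ℤ) + 1) ∧ (∃ i, |x i| = (r : ℤ) + 1) ∧ ∃ y ∈ cubeSet d r, Adj x y}

/-- Characterization of `h_r(x) = P_x(T_Q > T_{∂C(o,r)})`: it vanishes on
`Q ∩ (C(o,r) ∪ ∂C(o,r))`, equals `1` on `∂C(o,r) ∖ Q`, is discrete harmonic on
`C(o,r) ∖ Q`, and (as a normalization) vanishes off `C(o,r) ∪ ∂C(o,r)`. -/
def IsOrthHarm (d : ℕ) (r : ℕ) (h : Site d → ℝ) : Prop :=
  (∀ x, x ∉ cubeSet d r ∪ cubeBdry d r → h x = 0) ∧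
  (∀ x ∈ orthant d ∩ (cubeSet d r ∪ cubeBdry d r), h x = 0) ∧
  (∀ x ∈ cubeBdry d r \ orthant d, h x = 1) ∧
  (∀ x ∈ cubeSet d r \ orthant d,
    h x = (1 / (2 * (d : ℝ))) * ∑ i, (h (x + unitVec d i) + h (x - unitVec d i)))

/-- The function `h_r` of the previous characterization. -/
def orthHarm (d : ℕ) (r : ℕ) : Site d → ℝ :=
  if h : ∃ f, IsOrthHarm d r f then h.choose else 0

/-- `p(k,r) = sup {h_r(x) : ‖x‖_∞ ≤ k}`. -/
def pkr (d k r : ℕ) : ℝ :=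
  sSup {t | ∃ x : Site d, (∀ i, |x i| ≤ (k : ℤ)) ∧ t = orthHarm d r x}

/-- The exponent `γ_d` of Theorem 3.1. -/
def gam (d : ℕ) : ℝ :=
  if d = 1 then 1 else if d = 2 then 1 / 3
  else (2 : ℝ) ^ (-(d : ℝ)) / (2 * (d : ℝ) ^ 2 * Real.log 3)

/-! ### Auxiliary material for Lemma (time) -/

section TimeAux

variable {d : ℕ}

/-- The increment of the "cross term" when stepping from `x` in direction `ε`. -/
def gfun (x : Site d) (ε : Dir d) : ℝ := if ε.2 then (x ε.1 : ℝ) else -(x ε.1 : ℝ)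

lemma nsq_nonneg (x : Site d) : 0 ≤ nsq x :=
  Finset.sum_nonneg fun _ _ => sq_nonneg _

lemma enorm_nonneg (x : Site d) : 0 ≤ enorm x := Real.sqrt_nonneg _

lemma nsq_zero : nsq (0 : Site d) = 0 := by simp [nsq]

lemma nsq_step (x : Site d) (ε : Dir d) :
    nsq (x + dirVec d ε) = nsq x + 2 * gfun x ε + 1 := by
  have h : ∀ v : Site d, nsq (x + v) =
      nsq x + 2 * (∑ j, (x j : ℝ) * (v j : ℝ)) + ∑ j, (v j : ℝ) ^ 2 := by
    intro v
    simp only [nsq, Pi.add_apply]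
    push_cast
    rw [Finset.mul_sum, ← Finset.sum_add_distrib, ← Finset.sum_add_distrib]
    exact Finset.sum_congr rfl fun j _ => by ring
  rw [h]
  rcases ε with ⟨j0, b⟩
  cases b <;>
    simp [dirVec, unitVec, gfun, apply_ite (fun z : ℤ => (z : ℝ)),
      mul_ite, Finset.sum_ite_eq'] <;> ring

/-- Cauchy–Schwarz on the lattice: `∑ |x_j| ≤ √d ‖x‖`. -/
lemma sum_abs_le (x : Site d) : ∑ j, |(x j : ℝ)| ≤ Real.sqrt d * enorm x := by
  have h1 : (∑ j, |(x j : ℝ)| * 1) ^ 2 ≤ (∑ j, |(x j : ℝ)| ^ 2) * ∑ j : Fin d, (1 : ℝ) ^ 2 :=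
    Finset.sum_mul_sq_le_sq_mul_sq _ _ _
  have h2 : (∑ j, |(x j : ℝ)|) ^ 2 ≤ nsq x * d := by
    simpa [nsq, sq_abs, Finset.card_univ] using h1
  have h3 : (0 : ℝ) ≤ ∑ j, |(x j : ℝ)| := Finset.sum_nonneg fun _ _ => abs_nonneg _
  have h4 : ∑ j, |(x j : ℝ)| ≤ Real.sqrt (nsq x * d) := by
    rw [Real.le_sqrt h3 (mul_nonneg (nsq_nonneg x) (Nat.cast_nonneg d))]
    exact h2
  calc ∑ j, |(x j : ℝ)| ≤ Real.sqrt (nsq x * d) := h4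
    _ = Real.sqrt d * enorm x := by
        rw [Real.sqrt_mul (nsq_nonneg x), enorm, mul_comm]

/-- Discrepancy bound on the total cross term accumulated at a single site. -/
lemma abs_sum_gfun_le {D : ℝ} (hD : 1 ≤ D) {r : Site d → ℕ → Dir d}
    (hr : HasDiscrepancy d D r) (x : Site d) (m : ℕ) :
    |∑ i ∈ Finset.range m, gfun x (r x i)| ≤ 2 * Real.sqrt d * D * enorm x := by
  have hD0 : (0 : ℝ) ≤ D := le_trans zero_le_one hD
  have hrhs : (0 : ℝ) ≤ 2 * Real.sqrt d * D * enorm x :=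
    mul_nonneg (mul_nonneg (mul_nonneg (by norm_num) (Real.sqrt_nonneg _)) hD0) (enorm_nonneg x)
  rcases Nat.eq_zero_or_pos m with hm | hm
  · simp [hm, hrhs]
  -- regroup the sum by fibers over directions
  have hfib : ∑ i ∈ Finset.range m, gfun x (r x i)
      = ∑ ε : Dir d, ((((Finset.range m).filter (fun i => r x i = ε)).card : ℝ)) * gfun x ε := by
    rw [← Finset.sum_fiberwise_of_maps_to' (fun i _ => Finset.mem_univ (r x i)) (gfun x)]
    exact Finset.sum_congr rfl fun ε _ => by
      rw [Finset.sum_const, nsmul_eq_mul]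
  -- the directions sum to zero
  have hzero : ∑ ε : Dir d, gfun x ε = 0 := by
    rw [Fintype.sum_prod_type]
    simp [gfun]
  have hcount : ∀ ε : Dir d,
      |((((Finset.range m).filter (fun i => r x i = ε)).card : ℝ)) - (m : ℝ) / (2 * d)| ≤ D := by
    intro ε
    have hset : ({i | i < m ∧ r x i = ε} : Set ℕ)
        = ↑((Finset.range m).filter (fun i => r x i = ε)) := by
      ext i; simp [Finset.mem_range]
    have := hr x ε m hm
    rwa [hset, Set.ncard_coe_finset] at this
  have habs : ∀ ε : Dir d, |gfun x ε| = |(x ε.1 : ℝ)| := by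
    intro ε; rcases ε with ⟨j, b⟩; cases b <;> simp [gfun]
  have hsum_abs : ∑ ε : Dir d, |gfun x ε| = 2 * ∑ j, |(x j : ℝ)| := by
    rw [Fintype.sum_prod_type]
    have hb : ∀ j : Fin d, ∑ b : Bool, |gfun x (j, b)| = 2 * |(x j : ℝ)| := by
      intro j
      have : ∀ b : Bool, |gfun x (j, b)| = |(x j : ℝ)| := fun b => habs (j, b)
      rw [Finset.sum_congr rfl fun b _ => this b, Finset.sum_const]
      simp [two_mul]
    rw [Finset.sum_congr rfl fun j _ => hb j, ← Finset.mul_sum]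
  rw [hfib]
  set N : Dir d → ℝ := fun ε => ((((Finset.range m).filter (fun i => r x i = ε)).card : ℝ))
    with hN
  have hkey : ∑ ε : Dir d, N ε * gfun x ε
      = ∑ ε : Dir d, (N ε - (m : ℝ) / (2 * d)) * gfun x ε := by
    have : ∑ ε : Dir d, (N ε - (m : ℝ) / (2 * d)) * gfun x ε
        = ∑ ε : Dir d, N ε * gfun x ε - ((m : ℝ) / (2 * d)) * ∑ ε : Dir d, gfun x ε := by
      rw [Finset.mul_sum, ← Finset.sum_sub_distrib]
      exact Finset.sum_congr rfl fun ε _ => by ring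
    rw [this, hzero, mul_zero, sub_zero]
  rw [hkey]
  calc |∑ ε : Dir d, (N ε - (m : ℝ) / (2 * d)) * gfun x ε|
      ≤ ∑ ε : Dir d, |(N ε - (m : ℝ) / (2 * d)) * gfun x ε| := Finset.abs_sum_le_sum_abs _ _
    _ ≤ ∑ ε : Dir d, D * |gfun x ε| := by
        refine Finset.sum_le_sum fun ε _ => ?_
        rw [abs_mul]
        exact mul_le_mul_of_nonneg_right (hcount ε) (abs_nonneg _)
    _ = D * (2 * ∑ j, |(x j : ℝ)|) := by rw [← Finset.mul_sum, hsum_abs]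
    _ ≤ D * (2 * (Real.sqrt d * enorm x)) := by
        refine mul_le_mul_of_nonneg_left ?_ hD0
        exact mul_le_mul_of_nonneg_left (sum_abs_le x) (by norm_num)
    _ = 2 * Real.sqrt d * D * enorm x := by ring

variable (r : Site d → ℕ → Dir d)

lemma rstep_snd_le (s : Site d × (Site d → ℕ)) (x : Site d) : s.2 x ≤ (rstep r s).2 x := by
  by_cases h : x = s.1
  · subst h; simp [rstep]
  · simp [rstep, Function.update_of_ne h]

lemma iter_snd_le (s : Site d × (Site d → ℕ)) (t : ℕ) (x : Site d) :
    s.2 x ≤ ((rstep r)^[t] s).2 x := by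
  induction t with
  | zero => simp
  | succ t ih =>
      rw [Function.iterate_succ_apply']
      exact ih.trans (rstep_snd_le r _ x)

lemma iter_snd_eq (s : Site d × (Site d → ℕ)) (t : ℕ) (x : Site d)
    (hx : ∀ k < t, ((rstep r)^[k] s).1 ≠ x) :
    ((rstep r)^[t] s).2 x = s.2 x := by
  induction t with
  | zero => rfl
  | succ t ih =>
      rw [Function.iterate_succ_apply']
      have h1 : ((rstep r)^[t] s).1 ≠ x := hx t (by omega)
      have h2 := ih (fun k hk => hx k (by omega))
      rw [show (rstep r ((rstep r)^[t] s)).2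
            = Function.update ((rstep r)^[t] s).2 ((rstep r)^[t] s).1
                (((rstep r)^[t] s).2 ((rstep r)^[t] s).1 + 1) from rfl,
        Function.update_of_ne (Ne.symm h1)]
      exact h2

/-- The set of sites visited during the first `t` steps of rotor walk from state `s`. -/
def visited (s : Site d × (Site d → ℕ)) (t : ℕ) : Finset (Site d) :=
  (Finset.range t).image (fun k => ((rstep r)^[k] s).1)

lemma walk_identity (s : Site d × (Site d → ℕ)) (t : ℕ) :
    nsq ((rstep r)^[t] s).1 = nsq s.1 + t +
      2 * ∑ x ∈ visited r s t,
        ∑ i ∈ Finset.Ico (s.2 x) (((rstep r)^[t] s).2 x), gfun x (r x i) := by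
  induction t with
  | zero => simp [visited]
  | succ t ih =>
      have hiter : (rstep r)^[t+1] s = rstep r ((rstep r)^[t] s) :=
        Function.iterate_succ_apply' _ _ _
      set u := (rstep r)^[t] s with hu
      set p := u.1 with hp
      set m := u.2 p with hm
      have hfst : ((rstep r)^[t+1] s).1 = p + dirVec d (r p m) := by rw [hiter]; rfl
      have hsnd : ((rstep r)^[t+1] s).2 = Function.update u.2 p (m + 1) := by rw [hiter]; rfl
      have hvis : visited r s (t+1) = insert p (visited r s t) := by
        rw [visited, Finset.range_add_one, Finset.image_insert]; rfl
      have hle : s.2 p ≤ m := iter_snd_le r s t p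
      -- abbreviations for the per-site sums
      set F : Site d → ℝ := fun x => ∑ i ∈ Finset.Ico (s.2 x) (u.2 x), gfun x (r x i) with hF
      set F' : Site d → ℝ :=
        fun x => ∑ i ∈ Finset.Ico (s.2 x) (Function.update u.2 p (m + 1) x), gfun x (r x i)
        with hF'
      have hFne : ∀ x, x ≠ p → F' x = F x := by
        intro x hxp
        simp only [hF', hF, Function.update_of_ne hxp]
      have hF'p : F' p = F p + gfun p (r p m) := by
        simp only [hF', hF, Function.update_self]
        exact Finset.sum_Ico_succ_top hle _
      have hmain : ∑ x ∈ insert p (visited r s t), F' x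
          = (∑ x ∈ visited r s t, F x) + gfun p (r p m) := by
        by_cases hpV : p ∈ visited r s t
        · rw [Finset.insert_eq_self.2 hpV]
          rw [← Finset.add_sum_erase _ F' hpV, ← Finset.add_sum_erase _ F hpV]
          rw [hF'p, Finset.sum_congr rfl
            (fun x hx => hFne x (Finset.ne_of_mem_erase hx))]
          ring
        · rw [Finset.sum_insert hpV]
          have hnot : ∀ k < t, ((rstep r)^[k] s).1 ≠ p := by
            intro k hk hkp
            exact hpV (Finset.mem_image.2 ⟨k, Finset.mem_range.2 hk, hkp⟩)
          have hup : u.2 p = s.2 p := iter_snd_eq r s t p hnot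
          have hFp0 : F p = 0 := by
            simp only [hF, hup, Finset.Ico_self, Finset.sum_empty]
          rw [hF'p, hFp0, Finset.sum_congr rfl (fun x hx => hFne x (by
            rintro rfl; exact hpV hx))]
          ring
      have hsum : ∑ x ∈ insert p (visited r s t),
            ∑ i ∈ Finset.Ico (s.2 x) (((rstep r)^[t+1] s).2 x), gfun x (r x i)
          = ∑ x ∈ insert p (visited r s t), F' x :=
        Finset.sum_congr rfl fun x _ => by rw [hsnd]
      rw [hfst, nsq_step, ih, hvis, hsum, hmain]
      push_cast
      ring

lemma aggState_finite (n : ℕ) : (aggState r n).1.Finite := by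
  induction n with
  | zero => exact Set.finite_singleton _
  | succ n ih => exact ih.insert _

lemma psi_insert_le {A : Set (Site d)} (hA : A.Finite) (y : Site d) :
    psi (insert y A) ≤ nsq y + psi A := by
  have h1 : psi A = ∑ x ∈ hA.toFinset, nsq x := by
    rw [psi, ← finsum_mem_coe_finset, Set.Finite.coe_toFinset]
  have h2 : psi (insert y A) = ∑ x ∈ insert y hA.toFinset, nsq x := by
    rw [psi, ← finsum_mem_coe_finset, Finset.coe_insert, Set.Finite.coe_toFinset]
  rw [h1, h2]
  by_cases hy : y ∈ hA.toFinset
  · rw [Finset.insert_eq_self.2 hy]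
    linarith [nsq_nonneg y]
  · rw [Finset.sum_insert hy]

lemma agg_invariant (n : ℕ) :
    ∃ S : Finset (Site d),
      ↑S ⊆ (aggState r n).1 ∧ (∀ x, x ∉ S → (aggState r n).2.1 x = 0) ∧
      psi (aggState r n).1 ≤ ((aggState r n).2.2 : ℝ) +
        2 * ∑ x ∈ S, ∑ i ∈ Finset.range ((aggState r n).2.1 x), gfun x (r x i) := by
  induction n with
  | zero =>
      refine ⟨∅, by simp, fun x _ => rfl, ?_⟩
      have : psi ((aggState r 0).1 : Set (Site d)) = psi ({0} : Set (Site d)) := rfl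
      rw [this, psi, finsum_mem_singleton, nsq_zero]
      simp
  | succ n ih =>
      obtain ⟨S, hS, hS0, hψ⟩ := ih
      set A := (aggState r n).1 with hA
      set c := (aggState r n).2.1 with hc
      set T := (aggState r n).2.2 with hT
      set τ := exitSteps r A c with hτ
      set y := (walkState r c τ).1 with hy
      set c' := (walkState r c τ).2 with hc'
      have hstate : aggState r (n+1) = (insert y A, c', T + τ) := rfl
      have hfin : A.Finite := aggState_finite r n
      have hyW : y = ((rstep r)^[τ] ((0 : Site d), c)).1 := rfl
      have hcW : c' = ((rstep r)^[τ] ((0 : Site d), c)).2 := rfl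
      set P := visited r ((0 : Site d), c) τ with hP
      have hPA : ∀ x ∈ P, x ∈ A := by
        intro x hx
        obtain ⟨k, hk, rfl⟩ := Finset.mem_image.1 hx
        rw [Finset.mem_range] at hk
        have hk' : k < sInf {t | (walkState r c t).1 ∉ A} := hk
        have := Nat.notMem_of_lt_sInf hk'
        exact (by simpa [Set.mem_setOf_eq, not_not] using this : (walkState r c k).1 ∈ A)
      have hmono : ∀ x, c x ≤ c' x := fun x => iter_snd_le r ((0 : Site d), c) τ x
      have hfix : ∀ x, x ∉ P → c' x = c x := by
        intro x hx
        refine iter_snd_eq r ((0 : Site d), c) τ x ?_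
        intro k hk hkx
        exact hx (Finset.mem_image.2 ⟨k, Finset.mem_range.2 hk, hkx⟩)
      have hnsqy : nsq y = (τ : ℝ) +
          2 * ∑ x ∈ P, ∑ i ∈ Finset.Ico (c x) (c' x), gfun x (r x i) := by
        have := walk_identity r ((0 : Site d), c) τ
        rw [← hyW] at this
        rw [this, nsq_zero]
        ring_nf
        rfl
      have hins : psi (insert y A) ≤ nsq y + psi A := psi_insert_le hfin y
      -- combine the sums
      have h1 : ∑ x ∈ S ∪ P, ∑ i ∈ Finset.range (c' x), gfun x (r x i)
          = ∑ x ∈ S ∪ P, ((∑ i ∈ Finset.range (c x), gfun x (r x i))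
              + ∑ i ∈ Finset.Ico (c x) (c' x), gfun x (r x i)) := by
        refine Finset.sum_congr rfl fun x _ => ?_
        rw [Finset.range_eq_Ico, Finset.range_eq_Ico]
        exact (Finset.sum_Ico_consecutive _ (Nat.zero_le _) (hmono x)).symm
      have h2 : ∑ x ∈ S ∪ P, ∑ i ∈ Finset.range (c x), gfun x (r x i)
          = ∑ x ∈ S, ∑ i ∈ Finset.range (c x), gfun x (r x i) :=
        (Finset.sum_subset Finset.subset_union_left
          (fun x _ hx => by rw [hS0 x hx]; simp)).symm
      have h3 : ∑ x ∈ S ∪ P, ∑ i ∈ Finset.Ico (c x) (c' x), gfun x (r x i)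
          = ∑ x ∈ P, ∑ i ∈ Finset.Ico (c x) (c' x), gfun x (r x i) :=
        (Finset.sum_subset Finset.subset_union_right
          (fun x _ hx => by rw [hfix x hx, Finset.Ico_self, Finset.sum_empty])).symm
      refine ⟨S ∪ P, ?_, ?_, ?_⟩
      · rw [hstate]
        intro x hx
        rcases Finset.mem_union.1 hx with h | h
        · exact Set.mem_insert_of_mem _ (hS h)
        · exact Set.mem_insert_of_mem _ (hPA x h)
      · rw [hstate]
        intro x hx
        rw [Finset.mem_union] at hx
        push_neg at hx
        rw [show (insert y A, c', T + τ).2.1 = c' from rfl, hfix x hx.2]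
        exact hS0 x hx.1
      · rw [hstate]
        show psi (insert y A) ≤ ((T + τ : ℕ) : ℝ) +
          2 * ∑ x ∈ S ∪ P, ∑ i ∈ Finset.range (c' x), gfun x (r x i)
        rw [h1]
        rw [Finset.sum_add_distrib, h2, h3]
        push_cast
        linarith [hins, hψ, hnsqy]

end TimeAux

theorem lemma_time (d : ℕ) (hd : 1 ≤ d) (D : ℝ) (hD : 1 ≤ D)
    (r : Site d → ℕ → Dir d) (hr : HasDiscrepancy d D r) (n : ℕ) (hn : 1 ≤ n) :
    psi (aggRegion r n) ≤ (totalSteps r n : ℝ)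
      + 8 * Real.sqrt d * D * (∑ᶠ x ∈ aggRegion r n, enorm x) + 4 * (d : ℝ) * D * (n : ℝ) := by
  obtain ⟨S, hS, hS0, hψ⟩ := agg_invariant r (n - 1)
  have hfin : (aggState r (n - 1)).1.Finite := aggState_finite r (n - 1)
  have hreg : aggRegion r n = (aggState r (n - 1)).1 := rfl
  have hD0 : (0 : ℝ) ≤ D := le_trans zero_le_one hD
  have hsqrt : (0 : ℝ) ≤ Real.sqrt d := Real.sqrt_nonneg _
  -- T_{n-1} ≤ T_n
  have hTmono : ((aggState r (n - 1)).2.2 : ℝ) ≤ (totalSteps r n : ℝ) := by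
    have hn' : n - 1 + 1 = n := Nat.succ_pred_eq_of_pos hn
    have h : totalSteps r n = (aggState r (n - 1)).2.2
        + exitSteps r (aggState r (n - 1)).1 (aggState r (n - 1)).2.1 := by
      rw [totalSteps, ← hn']
      rfl
    exact_mod_cast Nat.le.intro h.symm
  -- bound the error term
  set σ := ∑ x ∈ S, enorm x with hσ
  have hsum : 2 * ∑ x ∈ S, ∑ i ∈ Finset.range ((aggState r (n - 1)).2.1 x), gfun x (r x i)
      ≤ 4 * Real.sqrt d * D * σ := by
    have step1 : ∑ x ∈ S, ∑ i ∈ Finset.range ((aggState r (n - 1)).2.1 x), gfun x (r x i)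
        ≤ ∑ x ∈ S, (2 * Real.sqrt d * D * enorm x) :=
      Finset.sum_le_sum fun x _ =>
        (le_abs_self _).trans (abs_sum_gfun_le hD hr x _)
    have step2 : ∑ x ∈ S, (2 * Real.sqrt d * D * enorm x) = 2 * Real.sqrt d * D * σ := by
      rw [hσ, Finset.mul_sum]
    nlinarith [step1, step2]
  -- compare the finset sum of norms with the finsum over the region
  set Sig := ∑ᶠ x ∈ aggRegion r n, enorm x with hSg
  have hSgeq : Sig = ∑ x ∈ hfin.toFinset, enorm x := by
    rw [hSg, hreg, ← finsum_mem_coe_finset, Set.Finite.coe_toFinset]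
  have hsigSg : σ ≤ Sig := by
    rw [hSgeq, hσ]
    refine Finset.sum_le_sum_of_subset_of_nonneg ?_ (fun x _ _ => enorm_nonneg x)
    intro x hx
    exact hfin.mem_toFinset.2 (hS hx)
  have hSg0 : 0 ≤ Sig := by
    rw [hSgeq]
    exact Finset.sum_nonneg fun x _ => enorm_nonneg x
  have hlast : (0 : ℝ) ≤ 4 * (d : ℝ) * D * (n : ℝ) := by positivity
  have hmul : 4 * Real.sqrt d * D * σ ≤ 8 * Real.sqrt d * D * Sig := by
    have h1 : 4 * Real.sqrt d * D * σ ≤ 4 * Real.sqrt d * D * Sig :=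
      mul_le_mul_of_nonneg_left hsigSg (by positivity)
    nlinarith [mul_nonneg (mul_nonneg hsqrt hD0) hSg0]
  rw [hreg]
  linarith [hψ, hsum, hmul, hTmono, hlast]

end RotorRouterPaper
end
end

section
/- For every d ≥ 1 and every n ≥ 1 there exists an orthoconvex set A ⊆ ℤ^d with |A| = n such that ē(A) ≥ ē(A') for every finite set A' ⊆ ℤ^d with |A'| = n. -/
open scoped BigOperators Pointwise symmDiff
open MeasureTheory Filter

noncomputable section
open scoped Classical
namespace RotorRouterPaper

/-! ### Basic lemmas -/

variable {d : ℕ}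

lemma unitVec_self (i : Fin d) : unitVec d i i = 1 := by simp [unitVec]

lemma unitVec_ne {i j : Fin d} (h : j ≠ i) : unitVec d i j = 0 := by simp [unitVec, h]

lemma add_unitVec_apply (x : Site d) (m j : Fin d) :
    (x + unitVec d m) j = x j + if j = m then 1 else 0 := rfl

lemma sub_unitVec_apply (x : Site d) (m j : Fin d) :
    (x - unitVec d m) j = x j - if j = m then 1 else 0 := rfl

lemma smul_unitVec_apply (x : Site d) (c : ℤ) (m j : Fin d) :
    (x + c • unitVec d m) j = x j + if j = m then c else 0 := by
  simp only [Pi.add_apply, Pi.smul_apply, unitVec, smul_eq_mul]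
  split <;> simp

/-- The sum of values of `e` at the `2d` neighbours of `x`. -/
def nbrSum (e : Site d → ℝ) (x : Site d) : ℝ :=
  ∑ m, (e (x + unitVec d m) + e (x - unitVec d m))

lemma nbrSum_add (e f : Site d → ℝ) (x : Site d) :
    nbrSum (fun z => e z + f z) x = nbrSum e x + nbrSum f x := by
  unfold nbrSum; rw [← Finset.sum_add_distrib]; apply Finset.sum_congr rfl; intros; ring

lemma nbrSum_sub (e f : Site d → ℝ) (x : Site d) :
    nbrSum (fun z => e z - f z) x = nbrSum e x - nbrSum f x := by
  unfold nbrSum; rw [← Finset.sum_sub_distrib]; apply Finset.sum_congr rfl; intros; ring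

lemma nbrSum_le (e f : Site d → ℝ) (x : Site d)
    (h : ∀ m : Fin d, e (x + unitVec d m) + e (x - unitVec d m)
      ≤ f (x + unitVec d m) + f (x - unitVec d m)) :
    nbrSum e x ≤ nbrSum f x :=
  Finset.sum_le_sum (fun m _ => h m)

lemma nbrSum_comp (Φ : Site d → Site d)
    (hΦ : ∀ x m, (Φ (x + unitVec d m) = Φ x + unitVec d m ∧
                  Φ (x - unitVec d m) = Φ x - unitVec d m) ∨
                 (Φ (x + unitVec d m) = Φ x - unitVec d m ∧
                  Φ (x - unitVec d m) = Φ x + unitVec d m))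
    (f : Site d → ℝ) (x : Site d) :
    nbrSum (fun z => f (Φ z)) x = nbrSum f (Φ x) := by
  unfold nbrSum
  apply Finset.sum_congr rfl
  intro m _
  rcases hΦ x m with ⟨h1, h2⟩ | ⟨h1, h2⟩ <;> simp only [h1, h2] <;> ring

/-- On ℤ^d (d ≥ 1), a finite-support function with no positive maximum is nonpositive. -/
lemma le_zero_of_no_pos_max (hd : 1 ≤ d) (F : Site d → ℝ)
    (hsupp : (Function.support F).Finite)
    (key : ∀ x, 0 < F x → (∀ z, F z ≤ F x) → False) : ∀ x, F x ≤ 0 := by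
  haveI : Nonempty (Fin d) := ⟨⟨0, hd⟩⟩
  haveI : Infinite (Site d) := by unfold Site; infer_instance
  obtain ⟨z₀, hz₀⟩ := hsupp.infinite_compl.nonempty
  have hz0 : F z₀ = 0 := Function.notMem_support.mp hz₀
  obtain ⟨y, hy, hymax⟩ := (insert z₀ hsupp.toFinset).exists_max_image F ⟨z₀, Finset.mem_insert_self _ _⟩
  have hmax : ∀ z, F z ≤ F y := by
    intro z
    by_cases hz : z ∈ insert z₀ hsupp.toFinset
    · exact hymax z hz
    · have : F z = 0 := by
        have : z ∉ Function.support F := by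
          intro hmem
          exact hz (Finset.mem_insert_of_mem (hsupp.mem_toFinset.mpr hmem))
        exact Function.notMem_support.mp this
      rw [this, ← hz0]
      exact hymax z₀ (Finset.mem_insert_self _ _)
  rcases le_or_gt (F y) 0 with h | h
  · exact fun x => le_trans (hmax x) h
  · exact absurd (key y h hmax) (fun t => t)

lemma empty_of_descending {S : Set (Site d)} (hS : S.Finite) (i : Fin d)
    (h : ∀ y ∈ S, y - unitVec d i ∈ S) : S = ∅ := by
  by_contra hne
  obtain ⟨y0, hy0⟩ := Set.nonempty_iff_ne_empty.mpr hne
  have hmem : ∀ k : ℕ, y0 - (k : ℤ) • unitVec d i ∈ S := by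
    intro k
    induction k with
    | zero => simpa using hy0
    | succ k ih =>
        have := h _ ih
        have heq : y0 - ((k : ℤ) + 1) • unitVec d i
            = y0 - (k : ℤ) • unitVec d i - unitVec d i := by
          funext j; simp [unitVec]; split <;> ring
        rw [show ((k + 1 : ℕ) : ℤ) = (k : ℤ) + 1 by push_cast; ring, heq]
        exact this
  have hinj : Function.Injective (fun k : ℕ => y0 - (k : ℤ) • unitVec d i) := by
    intro a b hab
    have := congrFun hab i
    simp [unitVec] at this
    omega
  exact hS.not_infinite (Set.infinite_of_injective_forall_mem hinj hmem)

/-- Auxiliary propagation form of the maximum principle. -/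
lemma le_zero_of_prop (hd : 1 ≤ d) {F : Site d → ℝ}
    (hsupp : (Function.support F).Finite) (i : Fin d)
    (key : ∀ x, 0 < F x → (∀ z, F z ≤ F x) → F (x - unitVec d i) = F x) :
    ∀ x, F x ≤ 0 := by
  apply le_zero_of_no_pos_max hd F hsupp
  intro x hx hmax
  set S : Set (Site d) := {z | F z = F x} with hSdef
  have hSsub : S ⊆ Function.support F := by
    intro z hz
    simp only [hSdef, Set.mem_setOf_eq] at hz
    exact Function.mem_support.mpr (by rw [hz]; exact ne_of_gt hx)
  have : S = ∅ := by
    apply empty_of_descending (hsupp.subset hSsub) i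
    intro y hy
    simp only [hSdef, Set.mem_setOf_eq] at hy ⊢
    have h1 : 0 < F y := hy ▸ hx
    have h2 : ∀ z, F z ≤ F y := fun z => hy ▸ hmax z
    rw [key y h1 h2, hy]
  have : x ∈ S := rfl
  rw [‹S = ∅›] at this
  exact this

lemma forcing1 (hd : 1 ≤ d) {F : Site d → ℝ} {M : ℝ} {y : Site d} (i : Fin d)
    (hall : ∀ z, F z ≤ M) (hsum : 2 * (d : ℝ) * M ≤ nbrSum F y) :
    F (y - unitVec d i) = M := by
  have hd' : (1 : ℝ) ≤ (d : ℝ) := by exact_mod_cast hd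
  have hrest : ∑ m ∈ Finset.univ.erase i, (F (y + unitVec d m) + F (y - unitVec d m))
      ≤ ((d : ℝ) - 1) * (2 * M) := by
    have h1 : ∑ m ∈ Finset.univ.erase i, (F (y + unitVec d m) + F (y - unitVec d m))
        ≤ ∑ _m ∈ Finset.univ.erase i, (M + M) :=
      Finset.sum_le_sum (fun m _ => add_le_add (hall _) (hall _))
    rw [Finset.sum_const, Finset.card_erase_of_mem (Finset.mem_univ i), Finset.card_univ,
      Fintype.card_fin] at h1
    have : ((d - 1 : ℕ) : ℝ) = (d : ℝ) - 1 := by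
      push_cast [Nat.cast_sub hd]; ring
    calc _ ≤ ((d - 1 : ℕ) : ℝ) * (M + M) := by rw [← nsmul_eq_mul]; exact h1
    _ = ((d : ℝ) - 1) * (2 * M) := by rw [this]; ring
  have hsplit : nbrSum F y = (F (y + unitVec d i) + F (y - unitVec d i)) +
      ∑ m ∈ Finset.univ.erase i, (F (y + unitVec d m) + F (y - unitVec d m)) := by
    unfold nbrSum
    rw [← Finset.add_sum_erase Finset.univ _ (Finset.mem_univ i)]
  have h1 := hall (y - unitVec d i)
  have h2 := hall (y + unitVec d i)
  have : M ≤ F (y - unitVec d i) := by nlinarith [hsum, hrest, hsplit]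
  linarith

lemma forcing2 (hd : 1 ≤ d) {F : Site d → ℝ} {M : ℝ} {y : Site d} (i : Fin d)
    (hall : ∀ z, F z ≤ M) (hM : 0 < M) (hcross : F (y + unitVec d i) ≤ 0)
    (hsum : (2 * (d : ℝ) - 1) * M ≤ nbrSum F y) :
    F (y - unitVec d i) = M := by
  have hd' : (1 : ℝ) ≤ (d : ℝ) := by exact_mod_cast hd
  have hrest : ∑ m ∈ Finset.univ.erase i, (F (y + unitVec d m) + F (y - unitVec d m))
      ≤ ((d : ℝ) - 1) * (2 * M) := by
    have h1 : ∑ m ∈ Finset.univ.erase i, (F (y + unitVec d m) + F (y - unitVec d m))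
        ≤ ∑ _m ∈ Finset.univ.erase i, (M + M) :=
      Finset.sum_le_sum (fun m _ => add_le_add (hall _) (hall _))
    rw [Finset.sum_const, Finset.card_erase_of_mem (Finset.mem_univ i), Finset.card_univ,
      Fintype.card_fin] at h1
    have : ((d - 1 : ℕ) : ℝ) = (d : ℝ) - 1 := by
      push_cast [Nat.cast_sub hd]; ring
    calc _ ≤ ((d - 1 : ℕ) : ℝ) * (M + M) := by rw [← nsmul_eq_mul]; exact h1
    _ = ((d : ℝ) - 1) * (2 * M) := by rw [this]; ring
  have hsplit : nbrSum F y = (F (y + unitVec d i) + F (y - unitVec d i)) +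
      ∑ m ∈ Finset.univ.erase i, (F (y + unitVec d m) + F (y - unitVec d m)) := by
    unfold nbrSum
    rw [← Finset.add_sum_erase Finset.univ _ (Finset.mem_univ i)]
  have h1 := hall (y - unitVec d i)
  have : M ≤ F (y - unitVec d i) := by nlinarith [hsum, hrest, hsplit, hcross]
  linarith



variable {d : ℕ}

/-! ### Existence and uniqueness of exit functions -/

lemma two_d_pos (hd : 1 ≤ d) : (0 : ℝ) < 2 * (d : ℝ) := by
  have : (1 : ℝ) ≤ (d : ℝ) := by exact_mod_cast hd
  linarith

lemma eq_clear (hd : 1 ≤ d) {S e : ℝ} (h : (1 / (2 * (d : ℝ))) * S - e = -1) :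
    S = 2 * (d : ℝ) * (e - 1) := by
  have hne : (2 * (d : ℝ)) ≠ 0 := ne_of_gt (two_d_pos hd)
  field_simp at h
  linarith

def extZ (s : Finset (Site d)) (f : {x // x ∈ s} → ℝ) : Site d → ℝ :=
  fun y => if h : y ∈ s then f ⟨y, h⟩ else 0

lemma extZ_apply_mem (s : Finset (Site d)) (f : {x // x ∈ s} → ℝ) {x : Site d} (hx : x ∈ s) :
    extZ s f x = f ⟨x, hx⟩ := dif_pos hx

lemma extZ_support (s : Finset (Site d)) (f : {x // x ∈ s} → ℝ) :
    Function.support (extZ s f) ⊆ ↑s := by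
  intro y hy
  by_contra h
  exact hy (dif_neg h)

lemma extZ_add (s : Finset (Site d)) (f g : {x // x ∈ s} → ℝ) :
    extZ s (f + g) = fun y => extZ s f y + extZ s g y := by
  funext y; by_cases h : y ∈ s <;> simp [extZ, h]

lemma extZ_smul (s : Finset (Site d)) (c : ℝ) (f : {x // x ∈ s} → ℝ) :
    extZ s (c • f) = fun y => c * extZ s f y := by
  funext y; by_cases h : y ∈ s <;> simp [extZ, h]

def Tmap (d : ℕ) (s : Finset (Site d)) : ({x // x ∈ s} → ℝ) →ₗ[ℝ] ({x // x ∈ s} → ℝ) where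
  toFun f := fun x => f x - (1 / (2 * (d : ℝ))) * nbrSum (extZ s f) x.1
  map_add' f g := by
    funext x
    simp only [extZ_add, Pi.add_apply]
    rw [show (nbrSum (fun y => extZ s f y + extZ s g y) x.1) =
      nbrSum (extZ s f) x.1 + nbrSum (extZ s g) x.1 from nbrSum_add _ _ _]
    ring
  map_smul' c f := by
    funext x
    simp only [extZ_smul, Pi.smul_apply, RingHom.id_apply, smul_eq_mul]
    have : nbrSum (fun y => c * extZ s f y) x.1 = c * nbrSum (extZ s f) x.1 := by
      unfold nbrSum; rw [Finset.mul_sum]; apply Finset.sum_congr rfl; intros; ring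

    rw [this]; ring

lemma Tmap_inj (hd : 1 ≤ d) (s : Finset (Site d)) : Function.Injective (Tmap d s) := by
  have hdpos : (0 : ℝ) < 2 * (d : ℝ) := by
    have : (1 : ℝ) ≤ (d : ℝ) := by exact_mod_cast hd
    linarith
  rw [injective_iff_map_eq_zero]
  intro f hf
  have main : ∀ g : {x // x ∈ s} → ℝ, Tmap d s g = 0 → ∀ x, extZ s g x ≤ 0 := by
    intro g hg
    apply le_zero_of_prop hd ((s.finite_toSet).subset (extZ_support s g)) ⟨0, hd⟩
    intro x hx hmax
    have hxs : x ∈ s := by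
      by_contra h
      rw [extZ, dif_neg h] at hx
      exact lt_irrefl 0 hx
    have h0 := congrFun hg ⟨x, hxs⟩
    simp only [Tmap, LinearMap.coe_mk, AddHom.coe_mk, Pi.zero_apply] at h0
    have heq : extZ s g x = (1 / (2 * (d : ℝ))) * nbrSum (extZ s g) x := by
      rw [← extZ_apply_mem s g hxs] at h0; linarith
    apply forcing1 hd _ hmax
    rw [heq]
    have hkey : 2 * (d : ℝ) * ((1 / (2 * (d : ℝ))) * nbrSum (extZ s g) x)
        = nbrSum (extZ s g) x := by
      field_simp
    linarith
  have h1 := main f hf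
  have h2 := main (-f) (by rw [map_neg, hf, neg_zero])
  funext x
  have e1 := h1 x.1
  have e2 := h2 x.1
  rw [extZ_apply_mem s f x.2] at e1
  have : extZ s (-f) x.1 = -(f x) := by
    rw [show extZ s (-f) x.1 = (-f) ⟨x.1, x.2⟩ from extZ_apply_mem s (-f) x.2]; rfl
  rw [this] at e2
  have : f x = 0 := le_antisymm e1 (by linarith)
  simpa using this

lemma exists_isExitFun (hd : 1 ≤ d) {A : Set (Site d)} (hA : A.Finite) :
    ∃ e, IsExitFun d A e := by
  obtain ⟨f, hf⟩ := (LinearMap.injective_iff_surjective.mp (Tmap_inj hd hA.toFinset))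
    (fun _ => 1)
  refine ⟨extZ hA.toFinset f, ?_, ?_⟩
  · intro x hx
    exact dif_neg (fun h => hx (hA.mem_toFinset.mp h))
  · intro x hx
    have hxs : x ∈ hA.toFinset := hA.mem_toFinset.mpr hx
    have h0 := congrFun hf ⟨x, hxs⟩
    simp only [Tmap, LinearMap.coe_mk, AddHom.coe_mk] at h0
    rw [← extZ_apply_mem hA.toFinset f hxs] at h0
    show (1 / (2 * (d : ℝ))) * nbrSum (extZ hA.toFinset f) x - extZ hA.toFinset f x = -1
    linarith

lemma isExitFun_unique (hd : 1 ≤ d) {A : Set (Site d)} (hA : A.Finite)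
    {e₁ e₂ : Site d → ℝ} (h1 : IsExitFun d A e₁) (h2 : IsExitFun d A e₂) : e₁ = e₂ := by
  have main : ∀ f g : Site d → ℝ, IsExitFun d A f → IsExitFun d A g →
      ∀ x, f x - g x ≤ 0 := by
    intro f g hf hg
    have hsupp : Function.support (fun x => f x - g x) ⊆ A := by
      intro x hx
      by_contra h
      rw [Function.mem_support, hf.1 x h, hg.1 x h, sub_zero] at hx
      exact hx rfl
    apply le_zero_of_prop hd (hA.subset hsupp) ⟨0, hd⟩
    intro x hx hmax
    have hxA : x ∈ A := by
      by_contra h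
      rw [hf.1 x h, hg.1 x h, sub_zero] at hx
      exact lt_irrefl 0 hx
    have e1 := hf.2 x hxA
    have e2 := hg.2 x hxA
    have heq : f x - g x = (1 / (2 * (d : ℝ))) * nbrSum (fun z => f z - g z) x := by
      rw [nbrSum_sub]
      show f x - g x = (1 / (2 * (d : ℝ))) * (nbrSum f x - nbrSum g x)
      have : (1 / (2 * (d : ℝ))) * nbrSum f x - f x = -1 := e1
      have : (1 / (2 * (d : ℝ))) * nbrSum g x - g x = -1 := e2
      unfold nbrSum at *
      ring_nf
      ring_nf at e1 e2
      linarith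
    apply forcing1 hd _ hmax
    have hdpos : (0 : ℝ) < 2 * (d : ℝ) := by
      have : (1 : ℝ) ≤ (d : ℝ) := by exact_mod_cast hd
      linarith
    rw [heq]
    field_simp
    exact le_rfl
  funext x
  have a1 := main e₁ e₂ h1 h2 x
  have a2 := main e₂ e₁ h2 h1 x
  linarith

lemma exitFun_spec (hd : 1 ≤ d) {A : Set (Site d)} (hA : A.Finite) :
    IsExitFun d A (exitFun d A) := by
  have h : ∃ e, IsExitFun d A e := exists_isExitFun hd hA
  rw [exitFun, dif_pos h]
  exact h.choose_spec

lemma exitFun_eq (hd : 1 ≤ d) {A : Set (Site d)} (hA : A.Finite) {e : Site d → ℝ}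
    (he : IsExitFun d A e) : exitFun d A = e :=
  isExitFun_unique hd hA (exitFun_spec hd hA) he

lemma exitFun_nonneg (hd : 1 ≤ d) {A : Set (Site d)} (hA : A.Finite) :
    ∀ x, 0 ≤ exitFun d A x := by
  set e := exitFun d A with he
  have hspec := exitFun_spec hd hA
  rw [← he] at hspec
  have hsupp : Function.support (fun x => -e x) ⊆ A := by
    intro x hx
    by_contra h
    rw [Function.mem_support, hspec.1 x h, neg_zero] at hx
    exact hx rfl
  have : ∀ x, -e x ≤ 0 := by
    apply le_zero_of_no_pos_max hd _ (hA.subset hsupp)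
    intro x hx hmax
    have hxA : x ∈ A := by
      by_contra h
      rw [hspec.1 x h, neg_zero] at hx
      exact lt_irrefl 0 hx
    have e1 := hspec.2 x hxA
    have hlow : 2 * (d : ℝ) * e x ≤ nbrSum e x := by
      have : ∀ m : Fin d, e x + e x ≤ e (x + unitVec d m) + e (x - unitVec d m) := by
        intro m
        have g1 := hmax (x + unitVec d m)
        have g2 := hmax (x - unitVec d m)
        simp only [neg_le_neg_iff] at g1 g2
        linarith
      have := Finset.sum_le_sum (fun m (_ : m ∈ Finset.univ) => this m)
      rw [Finset.sum_const, Finset.card_univ, Fintype.card_fin, nsmul_eq_mul] at this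
      unfold nbrSum
      linarith [this]
    have hd' : (1 : ℝ) ≤ (d : ℝ) := by exact_mod_cast hd
    show False
    have h3 : nbrSum e x = 2 * (d : ℝ) * (e x - 1) := eq_clear hd e1
    nlinarith [hlow, h3]
  intro x
  have := this x
  linarith

lemma exitFun_ge_one (hd : 1 ≤ d) {A : Set (Site d)} (hA : A.Finite)
    {x : Site d} (hx : x ∈ A) : 1 ≤ exitFun d A x := by
  have hspec := exitFun_spec hd hA
  have e1 := hspec.2 x hx
  have hnn : 0 ≤ nbrSum (exitFun d A) x := by
    apply Finset.sum_nonneg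
    intro m _
    have := exitFun_nonneg hd hA (x + unitVec d m)
    have := exitFun_nonneg hd hA (x - unitVec d m)
    linarith
  have hd' : (1 : ℝ) ≤ (d : ℝ) := by exact_mod_cast hd
  have h3 : nbrSum (exitFun d A) x = 2 * (d : ℝ) * (exitFun d A x - 1) := eq_clear hd e1
  nlinarith [h3, hnn]

lemma exitFun_mono (hd : 1 ≤ d) {A B : Set (Site d)} (hA : A.Finite) (hB : B.Finite)
    (hAB : A ⊆ B) : ∀ x, exitFun d A x ≤ exitFun d B x := by
  have hsA := exitFun_spec hd hA
  have hsB := exitFun_spec hd hB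
  set eA := exitFun d A with heAdef
  set eB := exitFun d B with heBdef
  have hsupp : Function.support (fun x => eA x - eB x) ⊆ B := by
    intro x hx
    by_contra h
    rw [Function.mem_support, hsA.1 x (fun hmem => h (hAB hmem)), hsB.1 x h, sub_zero] at hx
    exact hx rfl
  have : ∀ x, eA x - eB x ≤ 0 := by
    apply le_zero_of_prop hd (hB.subset hsupp) ⟨0, hd⟩
    intro x hx hmax
    have hxA : x ∈ A := by
      by_contra h
      rw [hsA.1 x h, zero_sub] at hx
      have := exitFun_nonneg hd hB x
      rw [← heBdef] at this
      linarith
    have e1 := hsA.2 x hxA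
    have e2 := hsB.2 x (hAB hxA)
    have heq : eA x - eB x = (1 / (2 * (d : ℝ))) * nbrSum (fun z => eA z - eB z) x := by
      rw [nbrSum_sub]
      have h1 : (1 / (2 * (d : ℝ))) * nbrSum eA x - eA x = -1 := e1
      have h2 : (1 / (2 * (d : ℝ))) * nbrSum eB x - eB x = -1 := e2
      linarith [mul_sub (1 / (2 * (d : ℝ))) (nbrSum eA x) (nbrSum eB x)]
    apply forcing1 hd _ hmax
    have hdpos : (0 : ℝ) < 2 * (d : ℝ) := by
      have : (1 : ℝ) ≤ (d : ℝ) := by exact_mod_cast hd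
      linarith
    rw [heq]
    field_simp
    exact le_rfl
  intro x
  linarith [this x]



variable {d : ℕ}

/-! ### ebar basics -/

instance : Nonempty (Site d) := ⟨fun _ => 0⟩

lemma range_exitFun_finite (hd : 1 ≤ d) {A : Set (Site d)} (hA : A.Finite) :
    (Set.range (exitFun d A)).Finite := by
  have hspec := exitFun_spec hd hA
  apply Set.Finite.subset ((hA.image (exitFun d A)).insert 0)
  rintro v ⟨x, rfl⟩
  by_cases hx : x ∈ A
  · exact Set.mem_insert_of_mem _ ⟨x, hx, rfl⟩
  · rw [hspec.1 x hx]; exact Set.mem_insert _ _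

lemma le_ebar (hd : 1 ≤ d) {A : Set (Site d)} (hA : A.Finite) (x : Site d) :
    exitFun d A x ≤ ebar d A :=
  le_csSup (range_exitFun_finite hd hA).bddAbove (Set.mem_range_self x)

lemma ebar_le (hd : 1 ≤ d) {A : Set (Site d)} (hA : A.Finite) {c : ℝ}
    (h : ∀ x, exitFun d A x ≤ c) : ebar d A ≤ c :=
  csSup_le (Set.range_nonempty _) (by rintro v ⟨x, rfl⟩; exact h x)

lemma ebar_exists (hd : 1 ≤ d) {A : Set (Site d)} (hA : A.Finite) :
    ∃ y, exitFun d A y = ebar d A := by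
  have := (Set.range_nonempty (exitFun d A)).csSup_mem (range_exitFun_finite hd hA)
  obtain ⟨y, hy⟩ := this
  exact ⟨y, hy⟩

lemma ebar_nonneg (hd : 1 ≤ d) {A : Set (Site d)} (hA : A.Finite) : 0 ≤ ebar d A :=
  le_trans (exitFun_nonneg hd hA (fun _ => 0)) (le_ebar hd hA _)

lemma ebar_mono (hd : 1 ≤ d) {A B : Set (Site d)} (hA : A.Finite) (hB : B.Finite)
    (hAB : A ⊆ B) : ebar d A ≤ ebar d B :=
  ebar_le hd hA (fun x => le_trans (exitFun_mono hd hA hB hAB x) (le_ebar hd hB x))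

/-! ### Transport along lattice automorphisms -/

lemma isExitFun_comp (Φ : Site d → Site d)
    (hΦ : ∀ x m, (Φ (x + unitVec d m) = Φ x + unitVec d m ∧
                  Φ (x - unitVec d m) = Φ x - unitVec d m) ∨
                 (Φ (x + unitVec d m) = Φ x - unitVec d m ∧
                  Φ (x - unitVec d m) = Φ x + unitVec d m))
    {A : Set (Site d)} {e : Site d → ℝ} (he : IsExitFun d A e) :
    IsExitFun d (Φ ⁻¹' A) (fun z => e (Φ z)) := by
  constructor
  · intro x hx
    exact he.1 _ hx
  · intro x hx
    have h0 := he.2 (Φ x) hx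
    have h1 : (∑ i, ((fun z => e (Φ z)) (x + unitVec d i) + (fun z => e (Φ z)) (x - unitVec d i)))
        = nbrSum (fun z => e (Φ z)) x := rfl
    rw [h1, nbrSum_comp Φ hΦ e x]
    exact h0

lemma exitFun_comp (hd : 1 ≤ d) (Φ : Site d → Site d) (hbij : Function.Bijective Φ)
    (hΦ : ∀ x m, (Φ (x + unitVec d m) = Φ x + unitVec d m ∧
                  Φ (x - unitVec d m) = Φ x - unitVec d m) ∨
                 (Φ (x + unitVec d m) = Φ x - unitVec d m ∧
                  Φ (x - unitVec d m) = Φ x + unitVec d m))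
    {A : Set (Site d)} (hA : A.Finite) :
    exitFun d (Φ ⁻¹' A) = fun z => exitFun d A (Φ z) := by
  have hfin : (Φ ⁻¹' A).Finite := hA.preimage (hbij.1.injOn)
  exact exitFun_eq hd hfin (isExitFun_comp Φ hΦ (exitFun_spec hd hA))

lemma ebar_comp (hd : 1 ≤ d) (Φ : Site d → Site d) (hbij : Function.Bijective Φ)
    (hΦ : ∀ x m, (Φ (x + unitVec d m) = Φ x + unitVec d m ∧
                  Φ (x - unitVec d m) = Φ x - unitVec d m) ∨
                 (Φ (x + unitVec d m) = Φ x - unitVec d m ∧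
                  Φ (x - unitVec d m) = Φ x + unitVec d m))
    {A : Set (Site d)} (hA : A.Finite) :
    ebar d (Φ ⁻¹' A) = ebar d A := by
  unfold ebar
  rw [exitFun_comp hd Φ hbij hΦ hA]
  congr 1
  exact Function.Surjective.range_comp hbij.2 (exitFun d A)

/-- Translation by `v`. -/
lemma transl_hyp (v : Site d) :
    ∀ (x : Site d) m, ((fun z => z + v) (x + unitVec d m) = (fun z => z + v) x + unitVec d m ∧
                  (fun z => z + v) (x - unitVec d m) = (fun z => z + v) x - unitVec d m) ∨
                 ((fun z => z + v) (x + unitVec d m) = (fun z => z + v) x - unitVec d m ∧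
                  (fun z => z + v) (x - unitVec d m) = (fun z => z + v) x + unitVec d m) := by
  intro x m
  left
  constructor <;> · funext j; simp; ring

lemma transl_bij (v : Site d) : Function.Bijective (fun z : Site d => z + v) :=
  (Equiv.addRight v).bijective

/-- Reflection of coordinate `i`. -/
def flipMap (i : Fin d) (x : Site d) : Site d := fun j => if j = i then -x i else x j

lemma flipMap_invol (i : Fin d) (x : Site d) : flipMap i (flipMap i x) = x := by
  funext j
  simp only [flipMap]
  split <;> simp_all

lemma flipMap_bij (i : Fin d) : Function.Bijective (flipMap (d := d) i) :=
  Function.Involutive.bijective (flipMap_invol i)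

lemma flipMap_hyp (i : Fin d) :
    ∀ (x : Site d) m, (flipMap i (x + unitVec d m) = flipMap i x + unitVec d m ∧
                  flipMap i (x - unitVec d m) = flipMap i x - unitVec d m) ∨
                 (flipMap i (x + unitVec d m) = flipMap i x - unitVec d m ∧
                  (flipMap i (x - unitVec d m) = flipMap i x + unitVec d m)) := by
  intro x m
  rcases eq_or_ne m i with rfl | hne
  · right
    constructor <;>
    · funext j
      simp only [flipMap, add_unitVec_apply, sub_unitVec_apply, Pi.add_apply, Pi.sub_apply]
      rcases eq_or_ne j m with rfl | hj
      · simp [unitVec]; ring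
      · simp [unitVec, hj]
  · left
    constructor <;>
    · funext j
      simp only [flipMap, add_unitVec_apply, sub_unitVec_apply, Pi.add_apply, Pi.sub_apply]
      rcases eq_or_ne j i with rfl | hj
      · simp [unitVec, Ne.symm hne, hne]
      · simp [unitVec, hj]

lemma nsq_flip (i : Fin d) (x : Site d) : nsq (flipMap i x) = nsq x := by
  unfold nsq
  apply Finset.sum_congr rfl
  intro j _
  simp only [flipMap]
  split
  · rename_i h; subst h; simp
  · simp



variable {d : ℕ}

/-! ### Components -/

def Step (d : ℕ) (p q : Site d) : Prop :=
  ∃ m, q = p + unitVec d m ∨ q = p - unitVec d m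

lemma step_symm {p q : Site d} (h : Step d p q) : Step d q p := by
  obtain ⟨m, h | h⟩ := h
  · exact ⟨m, Or.inr (by rw [h]; abel)⟩
  · exact ⟨m, Or.inl (by rw [h]; abel)⟩

lemma step_coord {p q : Site d} (h : Step d p q) (j : Fin d) :
    q j = p j + 1 ∨ q j = p j - 1 ∨ q j = p j := by
  obtain ⟨m, rfl | rfl⟩ := h
  · rcases eq_or_ne j m with rfl | hj
    · left; simp [unitVec]
    · right; right; simp [unitVec, hj]
  · rcases eq_or_ne j m with rfl | hj
    · right; left; simp [unitVec]
    · right; right; simp [unitVec, hj]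

def comp (A : Set (Site d)) (x : Site d) : Set (Site d) :=
  {y | y ∈ A ∧ Relation.ReflTransGen (fun p q => q ∈ A ∧ Step d p q) x y}

lemma comp_subset {A : Set (Site d)} {x : Site d} : comp A x ⊆ A := fun _ h => h.1

lemma mem_comp_self {A : Set (Site d)} {x : Site d} (hx : x ∈ A) : x ∈ comp A x :=
  ⟨hx, Relation.ReflTransGen.refl⟩

lemma comp_closed {A : Set (Site d)} {x y z : Site d} (hy : y ∈ comp A x) (hz : z ∈ A)
    (hs : Step d y z) : z ∈ comp A x :=
  ⟨hz, hy.2.tail ⟨hz, hs⟩⟩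

lemma exitFun_comp_eq (hd : 1 ≤ d) {A : Set (Site d)} (hA : A.Finite) {x : Site d}
    (hx : x ∈ A) : ∀ y ∈ comp A x, exitFun d A y = exitFun d (comp A x) y := by
  set K := comp A x with hK
  have hKfin : K.Finite := hA.subset comp_subset
  have hDfin : (A \ K).Finite := hA.subset Set.diff_subset
  have hsK := exitFun_spec hd hKfin
  have hsD := exitFun_spec hd hDfin
  have hglue : IsExitFun d A (fun z => exitFun d K z + exitFun d (A \ K) z) := by
    constructor
    · intro z hz
      show exitFun d K z + exitFun d (A \ K) z = 0
      rw [hsK.1 z (fun hm => hz (comp_subset hm)), hsD.1 z (fun hm => hz hm.1), add_zero]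
    · intro z hz
      by_cases hzK : z ∈ K
      · have hD0 : ∀ m : Fin d, exitFun d (A \ K) (z + unitVec d m) = 0 ∧
            exitFun d (A \ K) (z - unitVec d m) = 0 := by
          intro m
          constructor <;>
          · apply hsD.1
            intro hmem
            exact hmem.2 (comp_closed hzK hmem.1 ⟨m, by simp⟩)
        have hDz : exitFun d (A \ K) z = 0 := hsD.1 z (fun hm => hm.2 hzK)
        have hsum : (∑ i, ((fun z => exitFun d K z + exitFun d (A \ K) z) (z + unitVec d i) +
            (fun z => exitFun d K z + exitFun d (A \ K) z) (z - unitVec d i)))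
            = nbrSum (exitFun d K) z := by
          apply Finset.sum_congr rfl
          intro m _
          have := hD0 m
          simp only [this.1, this.2]
          ring
        rw [hsum]
        show (1 / (2 * (d:ℝ))) * nbrSum (exitFun d K) z
          - (exitFun d K z + exitFun d (A \ K) z) = -1
        rw [hDz, add_zero]
        have := hsK.2 z hzK
        unfold nbrSum
        simpa using this
      · have hzD : z ∈ A \ K := ⟨hz, hzK⟩
        have hK0 : ∀ m : Fin d, exitFun d K (z + unitVec d m) = 0 ∧
            exitFun d K (z - unitVec d m) = 0 := by
          intro m
          constructor <;>
          · apply hsK.1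
            intro hmem
            exact hzK (comp_closed hmem hz (step_symm ⟨m, by simp⟩))
        have hKz : exitFun d K z = 0 := hsK.1 z hzK
        have hsum : (∑ i, ((fun z => exitFun d K z + exitFun d (A \ K) z) (z + unitVec d i) +
            (fun z => exitFun d K z + exitFun d (A \ K) z) (z - unitVec d i)))
            = nbrSum (exitFun d (A \ K)) z := by
          apply Finset.sum_congr rfl
          intro m _
          have := hK0 m
          simp only [this.1, this.2]
          ring
        rw [hsum]
        show (1 / (2 * (d:ℝ))) * nbrSum (exitFun d (A \ K)) z
          - (exitFun d K z + exitFun d (A \ K) z) = -1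
        rw [hKz, zero_add]
        have := hsD.2 z hzD
        unfold nbrSum
        simpa using this
  intro y hy
  rw [exitFun_eq hd hA hglue]
  have : exitFun d (A \ K) y = 0 := hsD.1 y (fun hm => hm.2 hy)
  simp [this]

lemma comp_spread {A : Set (Site d)} {x : Site d} (hx : x ∈ A) :
    ∀ y ∈ comp A x, ∀ (j : Fin d) (c : ℤ), min (x j) (y j) ≤ c → c ≤ max (x j) (y j) →
      ∃ z ∈ comp A x, z j = c := by
  have main : ∀ y : Site d, Relation.ReflTransGen (fun p q => q ∈ A ∧ Step d p q) x y →
      ∀ (j : Fin d) (c : ℤ), min (x j) (y j) ≤ c → c ≤ max (x j) (y j) →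
      ∃ z ∈ comp A x, z j = c := by
    intro y hy
    induction hy with
    | refl =>
        intro j c h1 h2
        refine ⟨x, mem_comp_self hx, ?_⟩
        omega
    | @tail b c' _ hbc ih =>
        intro j cc h1 h2
        have hstep := step_coord hbc.2 j
        by_cases hc : min (x j) (b j) ≤ cc ∧ cc ≤ max (x j) (b j)
        · exact ih j cc hc.1 hc.2
        · have : cc = c' j := by omega
          subst this
          refine ⟨c', ⟨hbc.1, ?_⟩, rfl⟩
          exact Relation.ReflTransGen.tail (by assumption) hbc
  intro y hy
  exact main y hy.2

lemma comp_coord_bound (hd : 1 ≤ d) {A : Set (Site d)} (hA : A.Finite) {x : Site d}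
    (hx : x ∈ A) {y : Site d} (hy : y ∈ comp A x) (j : Fin d) :
    (y j - x j).natAbs + 1 ≤ (comp A x).ncard := by
  set K := comp A x with hKdef
  have hKfin : K.Finite := hA.subset comp_subset
  set a := min (x j) (y j)
  set b := max (x j) (y j)
  have hcard : (Finset.Icc a b).card = (y j - x j).natAbs + 1 := by
    rw [Int.card_Icc]
    have : a ≤ b := min_le_max
    omega
  rw [← hcard]
  rw [Set.ncard_eq_toFinset_card K hKfin]
  set g : ℤ → Site d := fun c =>
    if h : a ≤ c ∧ c ≤ b then (comp_spread hx y hy j c h.1 h.2).choose else x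
  apply Finset.card_le_card_of_injOn g
  · intro c hc
    rw [Finset.coe_Icc, Set.mem_Icc] at hc
    have hspec := (comp_spread hx y hy j c hc.1 hc.2).choose_spec
    rw [Finset.mem_coe, Set.Finite.mem_toFinset]
    simp only [g, dif_pos hc]
    exact hspec.1
  · intro c1 hc1 c2 hc2 heq
    rw [Finset.coe_Icc, Set.mem_Icc] at hc1 hc2
    have s1 := (comp_spread hx y hy j c1 hc1.1 hc1.2).choose_spec
    have s2 := (comp_spread hx y hy j c2 hc2.1 hc2.2).choose_spec
    have e1 : g c1 = (comp_spread hx y hy j c1 hc1.1 hc1.2).choose := dif_pos hc1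
    have e2 : g c2 = (comp_spread hx y hy j c2 hc2.1 hc2.2).choose := dif_pos hc2
    rw [e1, e2] at heq
    rw [← s1.2, ← s2.2, heq]



variable {d : ℕ}

/-! ### Polarization -/

def pmap (i : Fin d) (ℓ : ℤ) (x : Site d) : Site d :=
  fun j => if j = i then 2 * ℓ + 1 - x i else x j

def pmove (i : Fin d) (ℓ : ℤ) (A : Set (Site d)) (u : Site d) : Site d :=
  if ℓ + 1 ≤ u i ∧ pmap i ℓ u ∉ A then pmap i ℓ u else u

def polar (i : Fin d) (ℓ : ℤ) (A : Set (Site d)) : Set (Site d) := pmove i ℓ A '' A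

lemma pmap_self (i : Fin d) (ℓ : ℤ) (x : Site d) : pmap i ℓ x i = 2 * ℓ + 1 - x i := by
  simp [pmap]

lemma pmap_ne (i : Fin d) (ℓ : ℤ) (x : Site d) {j : Fin d} (h : j ≠ i) :
    pmap i ℓ x j = x j := by simp [pmap, h]

lemma pmap_invol (i : Fin d) (ℓ : ℤ) (x : Site d) : pmap i ℓ (pmap i ℓ x) = x := by
  funext j
  rcases eq_or_ne j i with rfl | hj
  · rw [pmap_self, pmap_self]; ring
  · rw [pmap_ne _ _ _ hj, pmap_ne _ _ _ hj]

lemma pmap_inj (i : Fin d) (ℓ : ℤ) : Function.Injective (pmap i ℓ) :=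
  Function.Involutive.injective (pmap_invol i ℓ)

lemma pmap_hyp (i : Fin d) (ℓ : ℤ) :
    ∀ (x : Site d) m, (pmap i ℓ (x + unitVec d m) = pmap i ℓ x + unitVec d m ∧
                  pmap i ℓ (x - unitVec d m) = pmap i ℓ x - unitVec d m) ∨
                 (pmap i ℓ (x + unitVec d m) = pmap i ℓ x - unitVec d m ∧
                  pmap i ℓ (x - unitVec d m) = pmap i ℓ x + unitVec d m) := by
  intro x m
  rcases eq_or_ne m i with rfl | hne
  · right
    constructor <;>
    · funext j
      rcases eq_or_ne j m with rfl | hj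
      · simp only [pmap, add_unitVec_apply, sub_unitVec_apply, Pi.add_apply, Pi.sub_apply,
          if_pos rfl]
        simp [unitVec]
        ring
      · simp only [add_unitVec_apply, sub_unitVec_apply, Pi.add_apply, Pi.sub_apply,
          pmap_ne _ _ _ hj, unitVec_ne hj]
        ring
  · left
    constructor <;>
    · funext j
      rcases eq_or_ne j i with rfl | hj
      · simp only [pmap, add_unitVec_apply, sub_unitVec_apply, Pi.add_apply, Pi.sub_apply,
          if_pos rfl]
        simp [unitVec, Ne.symm hne, hne]
      · simp only [add_unitVec_apply, sub_unitVec_apply, Pi.add_apply, Pi.sub_apply]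
        simp only [pmap, if_neg hj]
        simp [unitVec]

lemma pmap_near_far {i : Fin d} {ℓ : ℤ} {x : Site d} : x i ≤ ℓ ↔ ℓ + 1 ≤ pmap i ℓ x i := by
  rw [pmap_self]; omega

lemma cross_eq {i : Fin d} {ℓ : ℤ} {y : Site d} (hy : y i = ℓ) :
    y + unitVec d i = pmap i ℓ y := by
  funext j
  rcases eq_or_ne j i with rfl | hj
  · rw [add_unitVec_apply, if_pos rfl, pmap_self]; omega
  · rw [add_unitVec_apply, if_neg hj, pmap_ne _ _ _ hj]; ring

lemma mem_polar_near {i : Fin d} {ℓ : ℤ} {A : Set (Site d)} {z : Site d} (hz : z i ≤ ℓ) :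
    z ∈ polar i ℓ A ↔ (z ∈ A ∨ pmap i ℓ z ∈ A) := by
  constructor
  · rintro ⟨u, huA, hu⟩
    unfold pmove at hu
    split at hu
    · right; rw [← hu, pmap_invol]; exact huA
    · left; rw [← hu]; exact huA
  · intro h
    rcases h with h | h
    · refine ⟨z, h, ?_⟩
      unfold pmove
      rw [if_neg]
      intro hc
      omega
    · by_cases hzA : z ∈ A
      · exact ⟨z, hzA, by unfold pmove; rw [if_neg]; intro hc; omega⟩
      · refine ⟨pmap i ℓ z, h, ?_⟩
        unfold pmove
        rw [if_pos ⟨pmap_near_far.mp hz, by rw [pmap_invol]; exact hzA⟩, pmap_invol]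

lemma mem_polar_far {i : Fin d} {ℓ : ℤ} {A : Set (Site d)} {z : Site d} (hz : ℓ + 1 ≤ z i) :
    z ∈ polar i ℓ A ↔ (z ∈ A ∧ pmap i ℓ z ∈ A) := by
  constructor
  · rintro ⟨u, huA, hu⟩
    unfold pmove at hu
    split at hu
    · exfalso
      rename_i hcond
      have : pmap i ℓ u i ≤ ℓ := by rw [pmap_self]; omega
      rw [hu] at this
      omega
    · rename_i hcond
      push_neg at hcond
      subst hu
      exact ⟨huA, hcond hz⟩
  · rintro ⟨h1, h2⟩
    refine ⟨z, h1, ?_⟩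
    unfold pmove
    rw [if_neg]
    rintro ⟨-, hc⟩
    exact hc h2

lemma polar_finite {i : Fin d} {ℓ : ℤ} {A : Set (Site d)} (hA : A.Finite) :
    (polar i ℓ A).Finite := hA.image _

lemma polar_ncard {i : Fin d} {ℓ : ℤ} {A : Set (Site d)} (hA : A.Finite) :
    (polar i ℓ A).ncard = A.ncard := by
  apply Set.ncard_image_of_injOn
  intro u hu v hv huv
  unfold pmove at huv
  split at huv <;> split at huv
  · exact pmap_inj i ℓ huv
  · rename_i h1 h2
    exfalso
    exact h1.2 (huv ▸ hv)
  · rename_i h1 h2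
    exfalso
    exact h2.2 (huv ▸ hu)
  · exact huv

lemma polar_nonempty {i : Fin d} {ℓ : ℤ} {A : Set (Site d)} (hA : A.Nonempty) :
    (polar i ℓ A).Nonempty := hA.image _

lemma psi_eq {A : Set (Site d)} (hA : A.Finite) : psi A = ∑ x ∈ hA.toFinset, nsq x := by
  unfold psi
  have h : ∑ᶠ x ∈ (↑hA.toFinset : Set (Site d)), nsq x = ∑ x ∈ hA.toFinset, nsq x :=
    finsum_mem_coe_finset _ _
  rw [hA.coe_toFinset] at h
  exact h

lemma psi_nonneg {A : Set (Site d)} (hA : A.Finite) : 0 ≤ psi A := by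
  rw [psi_eq hA]
  apply Finset.sum_nonneg
  intro x _
  unfold nsq
  positivity

lemma nsq_mem_le_psi {A : Set (Site d)} (hA : A.Finite) {x : Site d} (hx : x ∈ A) :
    nsq x ≤ psi A := by
  rw [psi_eq hA]
  apply Finset.single_le_sum (f := fun z => nsq z)
  · intro z _
    unfold nsq; positivity
  · exact hA.mem_toFinset.mpr hx

lemma nsq_pmap_lt {i : Fin d} {ℓ : ℤ} {u : Site d} (hℓ : 0 ≤ ℓ) (hu : ℓ + 1 ≤ u i) :
    nsq (pmap i ℓ u) < nsq u := by
  unfold nsq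
  have hsplit : ∀ (x : Site d), ∑ j, ((x j : ℝ)) ^ 2
      = ((x i : ℝ)) ^ 2 + ∑ j ∈ Finset.univ.erase i, ((x j : ℝ)) ^ 2 := by
    intro x
    rw [← Finset.add_sum_erase Finset.univ _ (Finset.mem_univ i)]
  rw [hsplit (pmap i ℓ u), hsplit u]
  have hrest : ∑ j ∈ Finset.univ.erase i, ((pmap i ℓ u j : ℝ)) ^ 2
      = ∑ j ∈ Finset.univ.erase i, ((u j : ℝ)) ^ 2 := by
    apply Finset.sum_congr rfl
    intro j hj
    rw [pmap_ne _ _ _ (Finset.ne_of_mem_erase hj)]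
  rw [hrest, pmap_self]
  have key : (2 * ℓ + 1 - u i) ^ 2 < (u i) ^ 2 := by nlinarith
  have : ((2 * ℓ + 1 - u i : ℤ) : ℝ) ^ 2 < ((u i : ℤ) : ℝ) ^ 2 := by
    exact_mod_cast key
  linarith

lemma polar_psi {i : Fin d} {ℓ : ℤ} {A : Set (Site d)} (hA : A.Finite) (hℓ : 0 ≤ ℓ)
    (hw : ∃ p ∈ A, ℓ + 1 ≤ p i ∧ pmap i ℓ p ∉ A) :
    psi (polar i ℓ A) < psi A := by
  have hA' : (polar i ℓ A).Finite := polar_finite hA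
  rw [psi_eq hA, psi_eq hA']
  have himg : hA'.toFinset = hA.toFinset.image (pmove i ℓ A) := by
    ext z
    rw [Set.Finite.mem_toFinset, Finset.mem_image]
    constructor
    · rintro ⟨u, huA, hu⟩
      exact ⟨u, hA.mem_toFinset.mpr huA, hu⟩
    · rintro ⟨u, huA, hu⟩
      exact ⟨u, hA.mem_toFinset.mp huA, hu⟩
  rw [himg]
  have hinj' : ∀ u ∈ hA.toFinset, ∀ v ∈ hA.toFinset, pmove i ℓ A u = pmove i ℓ A v → u = v := by
    intro u hu v hv huv
    unfold pmove at huv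
    split at huv <;> split at huv
    · exact pmap_inj i ℓ huv
    · exact absurd (huv ▸ (hA.mem_toFinset.mp hv)) (by rename_i h1 _; exact h1.2)
    · exact absurd (huv ▸ (hA.mem_toFinset.mp hu)) (by rename_i _ h2; exact h2.2)
    · exact huv
  calc ∑ x ∈ Finset.image (pmove i ℓ A) hA.toFinset, nsq x
      = ∑ u ∈ hA.toFinset, nsq (pmove i ℓ A u) := Finset.sum_image hinj'
    _ < ∑ u ∈ hA.toFinset, nsq u := by
        apply Finset.sum_lt_sum
        · intro u hu
          unfold pmove
          split
          · rename_i hcond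
            exact le_of_lt (nsq_pmap_lt hℓ hcond.1)
          · exact le_refl _
        · obtain ⟨p, hpA, hp1, hp2⟩ := hw
          refine ⟨p, hA.mem_toFinset.mpr hpA, ?_⟩
          unfold pmove
          rw [if_pos ⟨hp1, hp2⟩]
          exact nsq_pmap_lt hℓ hp1



variable {d : ℕ}

def gpF (i : Fin d) (ℓ : ℤ) (e e' : Site d → ℝ) (z : Site d) : ℝ :=
  max (e z) (e (pmap i ℓ z)) - e' z

def hpF (i : Fin d) (ℓ : ℤ) (e e' : Site d → ℝ) (z : Site d) : ℝ :=
  (e z + e (pmap i ℓ z)) - (e' z + e' (pmap i ℓ z))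

def GF (i : Fin d) (ℓ : ℤ) (e e' : Site d → ℝ) (z : Site d) : ℝ :=
  if z i ≤ ℓ then max (gpF i ℓ e e' z) (hpF i ℓ e e' z) else 0

lemma nbrSum_split (F : Site d → ℝ) (y : Site d) (i : Fin d) :
    nbrSum F y = (F (y + unitVec d i) + F (y - unitVec d i)) +
      ∑ m ∈ Finset.univ.erase i, (F (y + unitVec d m) + F (y - unitVec d m)) := by
  unfold nbrSum
  rw [← Finset.add_sum_erase Finset.univ _ (Finset.mem_univ i)]

/-- Polarization does not decrease the maximal expected exit time. -/
lemma polar_ebar (hd : 1 ≤ d) (i : Fin d) (ℓ : ℤ) {A : Set (Site d)} (hA : A.Finite) :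
    ebar d A ≤ ebar d (polar i ℓ A) := by
  set A' := polar i ℓ A with hA'def
  have hA' : A'.Finite := polar_finite hA
  set e := exitFun d A with he
  set e' := exitFun d A' with he'
  have hse : IsExitFun d A e := exitFun_spec hd hA
  have hse' : IsExitFun d A' e' := exitFun_spec hd hA'
  have hen : ∀ z, 0 ≤ e z := exitFun_nonneg hd hA
  have hen' : ∀ z, 0 ≤ e' z := exitFun_nonneg hd hA'
  have heq : ∀ z ∈ A, nbrSum e z = 2 * (d : ℝ) * (e z - 1) := by
    intro z hz
    exact eq_clear hd (hse.2 z hz)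
  have heq' : ∀ z ∈ A', nbrSum e' z = 2 * (d : ℝ) * (e' z - 1) := by
    intro z hz
    exact eq_clear hd (hse'.2 z hz)
  have hinv : ∀ z : Site d, pmap i ℓ (pmap i ℓ z) = z := pmap_invol i ℓ
  have hnbrσ : ∀ (f : Site d → ℝ) (x : Site d),
      nbrSum (fun z => f (pmap i ℓ z)) x = nbrSum f (pmap i ℓ x) :=
    fun f x => nbrSum_comp _ (pmap_hyp i ℓ) f x
  have heqσ : ∀ z, pmap i ℓ z ∈ A →
      nbrSum (fun w => e (pmap i ℓ w)) z = 2 * (d : ℝ) * (e (pmap i ℓ z) - 1) := by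
    intro z hz
    rw [hnbrσ e z]
    exact heq _ hz
  have heqσ' : ∀ z, pmap i ℓ z ∈ A' →
      nbrSum (fun w => e' (pmap i ℓ w)) z = 2 * (d : ℝ) * (e' (pmap i ℓ z) - 1) := by
    intro z hz
    rw [hnbrσ e' z]
    exact heq' _ hz
  set G := GF i ℓ e e' with hG
  have hGval : ∀ z, G z = if z i ≤ ℓ then max (gpF i ℓ e e' z) (hpF i ℓ e e' z) else 0 :=
    fun z => rfl
  have hGfar : ∀ z, ℓ < z i → G z = 0 := by
    intro z hz
    rw [hGval, if_neg (by omega)]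
  have hgpG : ∀ z, z i ≤ ℓ → gpF i ℓ e e' z ≤ G z := by
    intro z hz
    rw [hGval, if_pos hz]
    exact le_max_left _ _
  have hhpG : ∀ z, z i ≤ ℓ → hpF i ℓ e e' z ≤ G z := by
    intro z hz
    rw [hGval, if_pos hz]
    exact le_max_right _ _
  have hmemA' : ∀ z, z i ≤ ℓ → (z ∈ A ∨ pmap i ℓ z ∈ A) → z ∈ A' :=
    fun z hz h => (mem_polar_near hz).mpr h
  have hmemσA' : ∀ z, z i ≤ ℓ → z ∈ A → pmap i ℓ z ∈ A → pmap i ℓ z ∈ A' := by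
    intro z hz h1 h2
    apply (mem_polar_far (z := pmap i ℓ z) (pmap_near_far.mp hz)).mpr
    rw [hinv]
    exact ⟨h2, h1⟩
  have hnotσA' : ∀ z, z i ≤ ℓ → ¬(z ∈ A ∧ pmap i ℓ z ∈ A) → e' (pmap i ℓ z) = 0 := by
    intro z hz hcon
    apply hse'.1
    intro hmem
    rw [mem_polar_far (pmap_near_far.mp hz), hinv] at hmem
    exact hcon ⟨hmem.2, hmem.1⟩
  have hGsupp : (Function.support G).Finite := by
    apply Set.Finite.subset
      ((hA.union (hA.preimage (pmap_inj i ℓ).injOn)).union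
        (hA'.union (hA'.preimage (pmap_inj i ℓ).injOn)))
    intro z hz
    rw [Function.mem_support] at hz
    by_contra hmem
    simp only [Set.mem_union, Set.mem_preimage] at hmem
    push_neg at hmem
    obtain ⟨⟨h1, h2⟩, h3, h4⟩ := hmem
    apply hz
    have z1 : e z = 0 := hse.1 z h1
    have z2 : e (pmap i ℓ z) = 0 := hse.1 _ h2
    have z3 : e' z = 0 := hse'.1 z h3
    have z4 : e' (pmap i ℓ z) = 0 := hse'.1 _ h4
    rw [hGval]
    split
    · unfold gpF hpF
      rw [z1, z2, z3, z4]
      simp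
    · rfl
  have key : ∀ y, 0 < G y → (∀ z, G z ≤ G y) → G (y - unitVec d i) = G y := by
    intro y hpos hmax
    have hyN : y i ≤ ℓ := by
      by_contra hc
      rw [hGfar y (by omega)] at hpos
      exact lt_irrefl 0 hpos
    set M := G y with hM
    have hMmax : max (gpF i ℓ e e' y) (hpF i ℓ e e' y) = M := by
      rw [hM, hGval, if_pos hyN]
    have hminus : ∀ m : Fin d, (y - unitVec d m) i ≤ ℓ := by
      intro m
      rw [sub_unitVec_apply]
      split <;> omega
    have hhpM : hpF i ℓ e e' y ≤ M := le_trans (le_max_right _ _) (le_of_eq hMmax)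
    by_cases hgM : gpF i ℓ e e' y = M
    · -- the `g`-branch
      have hgpos : 0 < max (e y) (e (pmap i ℓ y)) := by
        have h1 := hen' y
        unfold gpF at hgM
        linarith [hpos, hgM.ge]
      have hyA' : y ∈ A' := by
        apply hmemA' y hyN
        by_contra hcon
        push_neg at hcon
        rw [hse.1 y hcon.1, hse.1 _ hcon.2] at hgpos
        simp at hgpos
      have heqy' : nbrSum e' y = 2 * (d : ℝ) * (e' y - 1) := heq' y hyA'
      rcases le_total (e (pmap i ℓ y)) (e y) with hab | hab
      · -- max attained at y
        have hmaxeq : max (e y) (e (pmap i ℓ y)) = e y := max_eq_left hab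
        have hyA : y ∈ A := by
          by_contra hc
          rw [hmaxeq, hse.1 y hc] at hgpos
          exact lt_irrefl 0 hgpos
        have heqy : nbrSum e y = 2 * (d : ℝ) * (e y - 1) := heq y hyA
        have hMval : M = e y - e' y := by
          rw [← hgM]
          unfold gpF
          rw [hmaxeq]
        have hsum : 2 * (d : ℝ) * M ≤ nbrSum G y := by
          have hid : nbrSum (fun z => e z - e' z) y = 2 * (d : ℝ) * M := by
            rw [nbrSum_sub, heqy, heqy', hMval]
            ring
          rw [← hid]
          refine nbrSum_le _ _ _ ?_
          intro m
          have hlo : e (y - unitVec d m) - e' (y - unitVec d m) ≤ G (y - unitVec d m) := by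
            refine le_trans ?_ (hgpG _ (hminus m))
            unfold gpF
            have := le_max_left (e (y - unitVec d m)) (e (pmap i ℓ (y - unitVec d m)))
            linarith
          have hhi : e (y + unitVec d m) - e' (y + unitVec d m) ≤ G (y + unitVec d m) := by
            by_cases hnear : (y + unitVec d m) i ≤ ℓ
            · refine le_trans ?_ (hgpG _ hnear)
              unfold gpF
              have := le_max_left (e (y + unitVec d m)) (e (pmap i ℓ (y + unitVec d m)))
              linarith
            · -- crossing neighbour: m = i and y i = ℓ
              have hmi : m = i := by
                by_contra hmi
                rw [add_unitVec_apply] at hnear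
                rw [if_neg (Ne.symm hmi)] at hnear
                omega
              rw [hmi] at hnear ⊢
              have hyeq : y i = ℓ := by
                rw [add_unitVec_apply, if_pos rfl] at hnear
                omega
              rw [cross_eq hyeq]
              rw [hGfar _ (by rw [pmap_self]; omega)]
              have hgm : gpF i ℓ e e' y = e y - e' y := by
                unfold gpF
                rw [hmaxeq]
              unfold hpF at hhpM
              rw [hgm] at hgM
              linarith
          exact add_le_add hhi hlo
        exact forcing1 hd i hmax hsum
      · -- max attained at pmap y
        have hmaxeq : max (e y) (e (pmap i ℓ y)) = e (pmap i ℓ y) := max_eq_right hab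
        have hσA : pmap i ℓ y ∈ A := by
          by_contra hc
          rw [hmaxeq, hse.1 _ hc] at hgpos
          exact lt_irrefl 0 hgpos
        have heqσy := heqσ y hσA
        have hMval : M = e (pmap i ℓ y) - e' y := by
          rw [← hgM]
          unfold gpF
          rw [hmaxeq]
        have hsum : 2 * (d : ℝ) * M ≤ nbrSum G y := by
          have hid : nbrSum (fun z => e (pmap i ℓ z) - e' z) y = 2 * (d : ℝ) * M := by
            have h1 := nbrSum_sub (fun z => e (pmap i ℓ z)) e' y
            rw [h1, heqσy, heqy', hMval]
            ring
          rw [← hid]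
          refine nbrSum_le _ _ _ ?_
          intro m
          have hlo : e (pmap i ℓ (y - unitVec d m)) - e' (y - unitVec d m)
              ≤ G (y - unitVec d m) := by
            refine le_trans ?_ (hgpG _ (hminus m))
            unfold gpF
            have := le_max_right (e (y - unitVec d m)) (e (pmap i ℓ (y - unitVec d m)))
            linarith
          have hhi : e (pmap i ℓ (y + unitVec d m)) - e' (y + unitVec d m)
              ≤ G (y + unitVec d m) := by
            by_cases hnear : (y + unitVec d m) i ≤ ℓ
            · refine le_trans ?_ (hgpG _ hnear)
              unfold gpF
              have := le_max_right (e (y + unitVec d m)) (e (pmap i ℓ (y + unitVec d m)))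
              linarith
            · have hmi : m = i := by
                by_contra hmi
                rw [add_unitVec_apply] at hnear
                rw [if_neg (Ne.symm hmi)] at hnear
                omega
              rw [hmi] at hnear ⊢
              have hyeq : y i = ℓ := by
                rw [add_unitVec_apply, if_pos rfl] at hnear
                omega
              rw [cross_eq hyeq]
              rw [hGfar _ (by rw [pmap_self]; omega), hinv]
              have hgm : gpF i ℓ e e' y = e (pmap i ℓ y) - e' y := by
                unfold gpF
                rw [hmaxeq]
              unfold hpF at hhpM
              rw [hgm] at hgM
              linarith
          exact add_le_add hhi hlo
        exact forcing1 hd i hmax hsum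
    · -- the `h`-branch
      have hhM : hpF i ℓ e e' y = M := by
        rcases max_choice (gpF i ℓ e e' y) (hpF i ℓ e e' y) with h | h
        · exact absurd (h ▸ hMmax) hgM
        · exact h ▸ hMmax
      by_cases hk2 : y ∈ A ∧ pmap i ℓ y ∈ A
      · have hyA' : y ∈ A' := hmemA' y hyN (Or.inl hk2.1)
        have hσA' : pmap i ℓ y ∈ A' := hmemσA' y hyN hk2.1 hk2.2
        have heqy := heq y hk2.1
        have heqσy := heqσ y hk2.2
        have heqy' := heq' y hyA'
        have heqσy' := heqσ' y hσA'
        set H : Site d → ℝ := fun z => (e z + e (pmap i ℓ z)) - (e' z + e' (pmap i ℓ z))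
          with hHdef
        have hid : nbrSum H y = 2 * (d : ℝ) * M := by
          rw [hHdef]
          have h1 := nbrSum_sub (fun z => e z + e (pmap i ℓ z))
            (fun z => e' z + e' (pmap i ℓ z)) y
          have h2 := nbrSum_add e (fun z => e (pmap i ℓ z)) y
          have h3 := nbrSum_add e' (fun z => e' (pmap i ℓ z)) y
          rw [h1, h2, h3, heqy, heqσy, heqy', heqσy', ← hhM]
          unfold hpF
          ring
        have hHle : ∀ w, w i ≤ ℓ → H w ≤ G w := fun w hw => hhpG w hw
        rcases lt_or_eq_of_le hyN with hylt | hyeq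
        · -- no crossing neighbour
          have hsum : 2 * (d : ℝ) * M ≤ nbrSum G y := by
            rw [← hid]
            refine nbrSum_le _ _ _ ?_
            intro m
            have hnearp : (y + unitVec d m) i ≤ ℓ := by
              rw [add_unitVec_apply]
              split <;> omega
            exact add_le_add (hHle _ hnearp) (hHle _ (hminus m))
          exact forcing1 hd i hmax hsum
        · -- crossing: y i = ℓ
          have hyeq' : y i = ℓ := hyeq
          have hcr : y + unitVec d i = pmap i ℓ y := cross_eq hyeq'
          have hcrossval : H (y + unitVec d i) = M := by
            rw [hHdef]
            dsimp only
            rw [hcr, hinv, ← hhM]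
            unfold hpF
            ring
          have hGcross : G (y + unitVec d i) = 0 := by
            rw [hcr]
            exact hGfar _ (by rw [pmap_self]; omega)
          have hsum' : 2 * (d : ℝ) * M ≤ nbrSum G y + M := by
            rw [← hid, nbrSum_split H y i, nbrSum_split G y i, hcrossval, hGcross]
            have hrest : ∑ m ∈ Finset.univ.erase i, (H (y + unitVec d m) + H (y - unitVec d m))
                ≤ ∑ m ∈ Finset.univ.erase i, (G (y + unitVec d m) + G (y - unitVec d m)) := by
              apply Finset.sum_le_sum
              intro m hm
              have hmi := Finset.ne_of_mem_erase hm
              have hnearp : (y + unitVec d m) i ≤ ℓ := by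
                rw [add_unitVec_apply, if_neg (Ne.symm hmi)]
                omega
              exact add_le_add (hHle _ hnearp) (hHle _ (hminus m))
            have h2 : H (y - unitVec d i) ≤ G (y - unitVec d i) := hHle _ (hminus i)
            linarith
          have hsum : (2 * (d : ℝ) - 1) * M ≤ nbrSum G y := by linarith
          have hG0 : G (y + unitVec d i) ≤ 0 := le_of_eq hGcross
          exact forcing2 hd i hmax hpos hG0 hsum
      · -- at most one of the pair is in A : then gp = hp, contradiction with hgM
        have hgh : gpF i ℓ e e' y = hpF i ℓ e e' y := by
          by_cases h1 : y ∈ A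
          · have h2 : pmap i ℓ y ∉ A := fun hc => hk2 ⟨h1, hc⟩
            have z2 : e (pmap i ℓ y) = 0 := hse.1 _ h2
            have z4 : e' (pmap i ℓ y) = 0 := hnotσA' y hyN (fun hc => hk2 hc)
            unfold gpF hpF
            rw [z2, z4, max_eq_left (hen y)]
            ring
          · have z1 : e y = 0 := hse.1 _ h1
            have z4 : e' (pmap i ℓ y) = 0 := hnotσA' y hyN (fun hc => hk2 hc)
            unfold gpF hpF
            rw [z1, z4, max_eq_right (hen _)]
            ring
        exact absurd (hgh.trans hhM) hgM
  have hGle : ∀ z, G z ≤ 0 := le_zero_of_prop hd hGsupp i key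
  apply ebar_le hd hA
  intro z
  rcases le_or_gt (z i) ℓ with hz | hz
  · have h1 := le_trans (hgpG z hz) (hGle z)
    unfold gpF at h1
    have h2 : e z ≤ e' z := le_trans (le_max_left _ (e (pmap i ℓ z))) (by linarith)
    exact le_trans h2 (le_ebar hd hA' z)
  · have hσz : (pmap i ℓ z) i ≤ ℓ := by rw [pmap_self]; omega
    have h1 := le_trans (hgpG _ hσz) (hGle _)
    unfold gpF at h1
    rw [hinv] at h1
    have h2 : e z ≤ e' (pmap i ℓ z) :=
      le_trans (le_max_right (e (pmap i ℓ z)) _) (by linarith)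
    exact le_trans h2 (le_ebar hd hA' _)



variable {d : ℕ}

def ibox (d : ℕ) (R : ℤ) : Set (Site d) := {x | ∀ j, |x j| ≤ R}

lemma ibox_finite (R : ℤ) : (ibox d R).Finite := by
  have hsub : ibox d R ⊆ Set.pi Set.univ (fun _ : Fin d => Set.Icc (-R) R) := by
    intro x hx j _
    have := hx j
    rw [Set.mem_Icc]
    rw [abs_le] at this
    exact this
  exact (Set.Finite.pi (fun _ => Set.finite_Icc _ _)).subset hsub

lemma comp_translate (hd : 1 ≤ d) (n : ℕ) {A : Set (Site d)} (hA : A.Finite)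
    (hcard : A.ncard ≤ n) {x : Site d} (hx : x ∈ A) :
    ∃ K' : Set (Site d), K'.Finite ∧ K' ⊆ ibox d ((n : ℤ) - 1) ∧ K'.Nonempty ∧
      K'.ncard ≤ n ∧ exitFun d A x = exitFun d K' (fun _ => 0) := by
  set K := comp A x with hKdef
  have hKfin : K.Finite := hA.subset comp_subset
  have hxK : x ∈ K := mem_comp_self hx
  have h1 : exitFun d A x = exitFun d K x := exitFun_comp_eq hd hA hx x hxK
  set Φ : Site d → Site d := fun z => z + x with hΦ
  set K' : Set (Site d) := Φ ⁻¹' K with hK'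
  have hK'fin : K'.Finite := hKfin.preimage ((transl_bij x).1.injOn)
  have h2 : exitFun d K' = fun z => exitFun d K (Φ z) :=
    exitFun_comp hd Φ (transl_bij x) (transl_hyp x) hKfin
  have hcardK : K.ncard ≤ n := le_trans (Set.ncard_le_ncard comp_subset hA) hcard
  refine ⟨K', hK'fin, ?_, ?_, ?_, ?_⟩
  · intro z hz j
    have hzK : z + x ∈ K := hz
    have hb := comp_coord_bound hd hA hx hzK j
    rw [hKdef] at hcardK
    have hzj : (z + x) j - x j = z j := by simp
    rw [hzj] at hb
    have habs : |z j| = ((z j).natAbs : ℤ) := Int.abs_eq_natAbs _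
    omega
  · exact ⟨0, by show (0 : Site d) + x ∈ K; rw [zero_add]; exact hxK⟩
  · have himg : K' = (fun z : Site d => z - x) '' K := by
      ext z
      simp only [hK', Set.mem_preimage, Set.mem_image, hΦ]
      constructor
      · intro h
        exact ⟨z + x, h, by abel⟩
      · rintro ⟨w, hw, rfl⟩
        show w - x + x ∈ K
        rw [sub_add_cancel]
        exact hw
    rw [himg, Set.ncard_image_of_injective _ (fun a b hab => by
      have : a - x + x = b - x + x := by rw [hab]
      rwa [sub_add_cancel, sub_add_cancel] at this)]
    exact hcardK
  · rw [h1, h2]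
    congr 1
    funext j
    show x j = (0 : ℤ) + x j
    rw [zero_add]

lemma ibox_mono {R R' : ℤ} (h : R ≤ R') : ibox d R ⊆ ibox d R' := by
  intro z hz j
  have := hz j
  omega

/-! ### flip helpers -/

lemma flip_preimage_eq_image (i : Fin d) (A : Set (Site d)) :
    flipMap i ⁻¹' A = flipMap i '' A :=
  (Set.image_eq_preimage_of_inverse (flipMap_invol i) (flipMap_invol i)).symm ▸ rfl

lemma ncard_flip (i : Fin d) (A : Set (Site d)) :
    (flipMap i ⁻¹' A).ncard = A.ncard := by
  rw [flip_preimage_eq_image]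
  exact Set.ncard_image_of_injective A (flipMap_bij i).1

lemma psi_flip (i : Fin d) {A : Set (Site d)} (hA : A.Finite) :
    psi (flipMap i ⁻¹' A) = psi A := by
  rw [flip_preimage_eq_image]
  have hfin : (flipMap i '' A).Finite := hA.image _
  rw [psi_eq hfin, psi_eq hA]
  have himg : hfin.toFinset = hA.toFinset.image (flipMap i) := by
    ext z
    rw [Set.Finite.mem_toFinset, Finset.mem_image]
    constructor
    · rintro ⟨u, hu, rfl⟩
      exact ⟨u, hA.mem_toFinset.mpr hu, rfl⟩
    · rintro ⟨u, hu, rfl⟩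
      exact ⟨u, hA.mem_toFinset.mp hu, rfl⟩
  rw [himg]
  rw [Finset.sum_image (fun u _ v _ h => (flipMap_bij i).1 h)]
  exact Finset.sum_congr rfl (fun u _ => nsq_flip i u)

lemma flip_mem_ibox (i : Fin d) {R : ℤ} {z : Site d} (hz : z ∈ ibox d R) :
    flipMap i z ∈ ibox d R := by
  intro j
  have := hz j
  have h2 := hz i
  unfold flipMap
  split
  · rename_i h
    subst h
    rw [abs_neg]
    exact h2
  · exact this

lemma ebar_flip (hd : 1 ≤ d) (i : Fin d) {A : Set (Site d)} (hA : A.Finite) :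
    ebar d (flipMap i ⁻¹' A) = ebar d A :=
  ebar_comp hd (flipMap i) (flipMap_bij i) (flipMap_hyp i) hA



variable {d : ℕ}

lemma padding (hd : 1 ≤ d) (n : ℕ) {A₀ : Set (Site d)} (hfin : A₀.Finite)
    (hne : A₀.Nonempty) (hcard : A₀.ncard ≤ n) (horth : Orthoconvex d A₀) :
    ∃ A : Set (Site d), A.Finite ∧ A.ncard = n ∧ Orthoconvex d A ∧ A₀ ⊆ A := by
  set i₀ : Fin d := ⟨0, hd⟩ with hi₀
  obtain ⟨q, hqA, hqmax⟩ := Set.exists_max_image A₀ (fun u => u i₀) hfin hne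
  set m₀ := A₀.ncard with hm₀
  have hm₀pos : 1 ≤ m₀ := by
    have := (Set.ncard_pos hfin).mpr hne
    omega
  set t : ℕ := n - m₀ with ht
  rcases Nat.eq_or_lt_of_le hcard with heq | hlt
  · exact ⟨A₀, hfin, heq, horth, subset_refl _⟩
  set segF : Finset (Site d) := (Finset.Icc (1 : ℤ) (t : ℤ)).image
    (fun c => q + c • unitVec d i₀) with hsegF
  set A : Set (Site d) := A₀ ∪ ↑segF with hA
  have hseg_char : ∀ z : Site d, z ∈ segF ↔
      ∃ c : ℤ, 1 ≤ c ∧ c ≤ (t : ℤ) ∧ z = q + c • unitVec d i₀ := by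
    intro z
    rw [hsegF, Finset.mem_image]
    constructor
    · rintro ⟨c, hc, rfl⟩
      rw [Finset.mem_Icc] at hc
      exact ⟨c, hc.1, hc.2, rfl⟩
    · rintro ⟨c, h1, h2, rfl⟩
      exact ⟨c, Finset.mem_Icc.mpr ⟨h1, h2⟩, rfl⟩
  have hseg_coord : ∀ z : Site d, z ∈ segF →
      (∀ j, j ≠ i₀ → z j = q j) ∧ (q i₀ + 1 ≤ z i₀ ∧ z i₀ ≤ q i₀ + (t : ℤ)) := by
    intro z hz
    obtain ⟨c, h1, h2, rfl⟩ := (hseg_char z).mp hz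
    constructor
    · intro j hj
      rw [smul_unitVec_apply, if_neg hj, add_zero]
    · rw [smul_unitVec_apply, if_pos rfl]
      omega
  have hdisj : Disjoint A₀ ↑segF := by
    rw [Set.disjoint_right]
    intro z hz hzA
    have h1 := (hseg_coord z hz).2.1
    have h2 := hqmax z hzA
    omega
  have hsegcard : (↑segF : Set (Site d)).ncard = t := by
    rw [Set.ncard_coe_finset, hsegF]
    rw [Finset.card_image_of_injective _ ?hinj]
    · rw [Int.card_Icc]
      omega
    case hinj =>
      intro a b hab
      have := congrFun hab i₀
      dsimp only at this
      rw [smul_unitVec_apply, if_pos rfl, smul_unitVec_apply, if_pos rfl] at this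
      omega
  have hAcard : A.ncard = n := by
    rw [hA, Set.ncard_union_eq hdisj hfin (segF.finite_toSet), hsegcard, ← hm₀]
    omega
  have hAfin : A.Finite := hfin.union (segF.finite_toSet)
  -- orthoconvexity of A
  refine ⟨A, hAfin, hAcard, ?_, Set.subset_union_left⟩
  intro a ha i k hk hak j hj0 hjk
  have hmem : ∀ z : Site d, z ∈ A ↔ z ∈ A₀ ∨ z ∈ segF := by
    intro z
    rw [hA, Set.mem_union, Finset.mem_coe]
  rw [hmem] at ha hak ⊢
  have hcoordk : ∀ c : ℤ, (a + c • unitVec d i) i = a i + c := by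
    intro c
    rw [smul_unitVec_apply, if_pos rfl]
  have hcoordo : ∀ (c : ℤ) (j' : Fin d), j' ≠ i → (a + c • unitVec d i) j' = a j' := by
    intro c j' hj'
    rw [smul_unitVec_apply, if_neg hj', add_zero]
  rcases ha with haA | haS
  · rcases hak with hakA | hakS
    · exact Or.inl (horth a haA i k hk hakA j hj0 hjk)
    · -- endpoint in segment: direction must be i₀
      have hii : i = i₀ := by
        by_contra hii
        have h3 := (hseg_coord _ hakS).2.1
        rw [hcoordo k i₀ (fun hc => hii hc.symm)] at h3
        have h2 := hqmax a haA
        omega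
      subst hii
      -- off-coordinates of a agree with q
      have hoff : ∀ j', j' ≠ i₀ → a j' = q j' := by
        intro j' hj'
        have h1 := (hseg_coord _ hakS).1 j' hj'
        rw [hcoordo k j' hj'] at h1
        exact h1
      have hs : q = a + (q i₀ - a i₀) • unitVec d i₀ := by
        funext j'
        rcases eq_or_ne j' i₀ with rfl | hj'
        · rw [hcoordk]
          ring
        · rw [hcoordo _ _ hj', hoff j' hj']
      have hsk : (a + k • unitVec d i₀) i₀ = a i₀ + k := hcoordk k
      have hbound := (hseg_coord _ hakS).2
      rw [hsk] at hbound
      rcases le_or_gt (a i₀ + j) (q i₀) with hcase | hcase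
      · -- intermediate point lands in A₀
        left
        rcases eq_or_lt_of_le hcase with heq2 | hlt2
        · have hj' : j = q i₀ - a i₀ := by omega
          have hq' : a + j • unitVec d i₀ = q := by rw [hj', ← hs]
          rw [hq']
          exact hqA
        · have hsA : a + (q i₀ - a i₀) • unitVec d i₀ ∈ A₀ := hs ▸ hqA
          exact horth a haA i₀ (q i₀ - a i₀) (by omega) hsA j hj0 (by omega)
      · -- intermediate point lands in the segment
        right
        rw [hseg_char]
        refine ⟨a i₀ + j - q i₀, by omega, by omega, ?_⟩
        funext j'
        rcases eq_or_ne j' i₀ with rfl | hj'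
        · rw [hcoordk, smul_unitVec_apply, if_pos rfl]
          omega
        · rw [hcoordo _ _ hj', smul_unitVec_apply, if_neg hj', hoff j' hj']
          ring
  · rcases hak with hakA | hakS
    · -- start in segment, end in A₀: impossible
      exfalso
      have hii : i = i₀ := by
        by_contra hii
        have h1 := (hseg_coord _ haS).2.1
        have h2 := hqmax _ hakA
        rw [hcoordo k i₀ (fun hc => hii hc.symm)] at h2
        omega
      subst hii
      have h1 := (hseg_coord _ haS).2.1
      have h2 := hqmax _ hakA
      rw [hcoordk] at h2
      omega
    · -- both in segment
      have hii : i = i₀ := by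
        by_contra hii
        have h4 := (hseg_coord _ hakS).1 i (fun hc => hii hc)
        have h5 := (hseg_coord _ haS).1 i (fun hc => hii hc)
        rw [hcoordk] at h4
        omega
      subst hii
      obtain ⟨ca, hca1, hca2, hceq⟩ := (hseg_char _).mp haS
      obtain ⟨cb, hcb1, hcb2, hceqb⟩ := (hseg_char _).mp hakS
      have hcb : cb = ca + k := by
        have h1 := congrFun hceqb i₀
        rw [hcoordk] at h1
        have h2 := congrFun hceq i₀
        rw [smul_unitVec_apply, if_pos rfl] at h1 h2
        omega
      right
      rw [hseg_char]
      refine ⟨ca + j, by omega, by omega, ?_⟩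
      rw [hceq]
      funext j'
      rcases eq_or_ne j' i₀ with rfl | hj'
      · rw [smul_unitVec_apply, if_pos rfl, smul_unitVec_apply, if_pos rfl,
          smul_unitVec_apply, if_pos rfl]
        ring
      · rw [smul_unitVec_apply, if_neg hj', smul_unitVec_apply, if_neg hj',
          smul_unitVec_apply, if_neg hj']
        ring



set_option maxHeartbeats 2000000 in
theorem lemma_orthoconvex' (d n : ℕ) (hd : 1 ≤ d) (hn : 1 ≤ n) :
    ∃ A : Set (Site d), A.Finite ∧ A.ncard = n ∧ Orthoconvex d A ∧
      ∀ A' : Set (Site d), A'.Finite → A'.ncard = n → ebar d A' ≤ ebar d A := by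
  classical
  have hdz : (1 : ℤ) ≤ (d : ℤ) := by exact_mod_cast hd
  have hnz : (1 : ℤ) ≤ (n : ℤ) := by exact_mod_cast hn
  set r₀ : ℤ := (d : ℤ) * (n : ℤ) ^ 2 with hr₀def
  have hr₀1 : 1 ≤ r₀ := by rw [hr₀def]; nlinarith
  set R : ℤ := 3 * r₀ + 1 with hRdef
  have hnR : (n : ℤ) - 1 ≤ R := by
    rw [hRdef, hr₀def]
    nlinarith
  set 𝒜 : Set (Set (Site d)) :=
    {B | (B ⊆ ibox d R ∧ B.Nonempty) ∧ B.ncard ≤ n ∧ B.Finite} with h𝒜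
  have h𝒜fin : 𝒜.Finite := ((ibox_finite R).finite_subsets).subset (fun B hB => hB.1.1)
  have hsing : ({(fun _ => 0 : Site d)} : Set (Site d)) ∈ 𝒜 := by
    refine ⟨⟨?_, Set.singleton_nonempty _⟩, ?_, Set.finite_singleton _⟩
    · intro z hz
      rw [Set.mem_singleton_iff] at hz
      subst hz
      intro j
      show |(0 : ℤ)| ≤ R
      rw [abs_zero]
      linarith
    · rw [Set.ncard_singleton]
      exact hn
  obtain ⟨Bs, hBs, hBsmax⟩ := Set.exists_max_image 𝒜 (ebar d) h𝒜fin ⟨_, hsing⟩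
  obtain ⟨⟨hBsbox, hBsne⟩, hBscard, hBsfin⟩ := hBs
  set M := ebar d Bs with hMdef
  have hmax𝒜 : ∀ B ∈ 𝒜, ebar d B ≤ M := hBsmax
  have hM1 : 1 ≤ M := by
    refine le_trans ?_ (hmax𝒜 _ hsing)
    refine le_trans ?_ (le_ebar hd (Set.finite_singleton _) (fun _ => 0))
    exact exitFun_ge_one hd (Set.finite_singleton _) rfl
  have hupper : ∀ A' : Set (Site d), A'.Finite → A'.ncard ≤ n → ebar d A' ≤ M := by
    intro A' hA' hcard
    apply ebar_le hd hA'
    intro x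
    by_cases hx : x ∈ A'
    · obtain ⟨K', hK'fin, hK'box, hK'ne, hK'card, hval⟩ := comp_translate hd n hA' hcard hx
      have hK'mem : K' ∈ 𝒜 := ⟨⟨hK'box.trans (ibox_mono hnR), hK'ne⟩, hK'card, hK'fin⟩
      rw [hval]
      exact le_trans (le_ebar hd hK'fin _) (hmax𝒜 _ hK'mem)
    · rw [(exitFun_spec hd hA').1 x hx]
      linarith
  set Ψ : ℝ := (n : ℝ) * ((d : ℝ) * ((n : ℝ) - 1) ^ 2) with hΨdef
  have hKmax : ∃ K', K' ∈ 𝒜 ∧ ebar d K' = M ∧ psi K' ≤ Ψ := by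
    obtain ⟨z, hz⟩ := ebar_exists hd hBsfin
    have hzB : z ∈ Bs := by
      by_contra hc
      rw [(exitFun_spec hd hBsfin).1 z hc] at hz
      rw [← hMdef] at hz
      linarith
    obtain ⟨K', hK'fin, hK'box, hK'ne, hK'card, hval⟩ := comp_translate hd n hBsfin hBscard hzB
    have hK'mem : K' ∈ 𝒜 := ⟨⟨hK'box.trans (ibox_mono hnR), hK'ne⟩, hK'card, hK'fin⟩
    have hvalM : exitFun d K' (fun _ => 0) = M := by
      rw [← hval, hz, hMdef]
    have hup : ebar d K' = M := by
      apply le_antisymm (hmax𝒜 _ hK'mem)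
      rw [← hvalM]
      exact le_ebar hd hK'fin _
    have hψ : psi K' ≤ Ψ := by
      rw [psi_eq hK'fin]
      have hcardF : hK'fin.toFinset.card = K'.ncard :=
        (Set.ncard_eq_toFinset_card K' hK'fin).symm
      have hterm : ∀ u ∈ hK'fin.toFinset, nsq u ≤ (d : ℝ) * ((n : ℝ) - 1) ^ 2 := by
        intro u hu
        rw [Set.Finite.mem_toFinset] at hu
        have hub := hK'box hu
        unfold nsq
        have hstep : ∀ j : Fin d, ((u j : ℝ)) ^ 2 ≤ ((n : ℝ) - 1) ^ 2 := by
          intro j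
          have h1 := hub j
          have h2 : |(u j : ℝ)| ≤ (n : ℝ) - 1 := by
            have h3 : ((|u j| : ℤ) : ℝ) ≤ (((n : ℤ) - 1 : ℤ) : ℝ) := by exact_mod_cast h1
            rw [Int.cast_abs] at h3
            push_cast at h3
            exact h3
          calc ((u j : ℝ)) ^ 2 = |(u j : ℝ)| ^ 2 := (sq_abs _).symm
          _ ≤ ((n : ℝ) - 1) ^ 2 := by
              have := abs_nonneg ((u j : ℝ))
              nlinarith
        calc ∑ j, ((u j : ℝ)) ^ 2 ≤ ∑ _j : Fin d, ((n : ℝ) - 1) ^ 2 :=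
              Finset.sum_le_sum (fun j _ => hstep j)
        _ = (d : ℝ) * ((n : ℝ) - 1) ^ 2 := by
            rw [Finset.sum_const, Finset.card_univ, Fintype.card_fin, nsmul_eq_mul]
      calc ∑ u ∈ hK'fin.toFinset, nsq u
          ≤ hK'fin.toFinset.card • ((d : ℝ) * ((n : ℝ) - 1) ^ 2) :=
            Finset.sum_le_card_nsmul _ _ _ hterm
      _ = (hK'fin.toFinset.card : ℝ) * ((d : ℝ) * ((n : ℝ) - 1) ^ 2) := nsmul_eq_mul _ _
      _ ≤ Ψ := by
          rw [hΨdef]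
          have hcle : (hK'fin.toFinset.card : ℝ) ≤ (n : ℝ) := by
            exact_mod_cast (hcardF ▸ hK'card : hK'fin.toFinset.card ≤ n)
          have hnn : (0:ℝ) ≤ (d : ℝ) * ((n : ℝ) - 1) ^ 2 := by positivity
          nlinarith
    exact ⟨K', hK'mem, hup, hψ⟩
  obtain ⟨K0, hK0mem, hK0ebar, hK0ψ⟩ := hKmax
  set 𝒜M : Set (Set (Site d)) := {B | B ∈ 𝒜 ∧ ebar d B = M ∧ psi B ≤ Ψ} with h𝒜M
  have h𝒜Mfin : 𝒜M.Finite := h𝒜fin.subset (fun B hB => hB.1)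
  obtain ⟨A₀, hA₀mem, hA₀min⟩ :=
    Set.exists_min_image 𝒜M psi h𝒜Mfin ⟨K0, hK0mem, hK0ebar, hK0ψ⟩
  obtain ⟨⟨⟨hA₀box, hA₀ne⟩, hA₀card, hA₀fin⟩, hA₀ebar, hA₀ψ⟩ := hA₀mem
  have hcoord : ∀ u ∈ A₀, ∀ j, |u j| ≤ r₀ := by
    intro u hu j
    have h2 : nsq u ≤ Ψ := le_trans (nsq_mem_le_psi hA₀fin hu) hA₀ψ
    have h1 : ((u j : ℝ)) ^ 2 ≤ nsq u := by
      unfold nsq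
      exact Finset.single_le_sum (f := fun j' => ((u j' : ℝ)) ^ 2)
        (fun j' _ => by positivity) (Finset.mem_univ j)
    have hd' : (1 : ℝ) ≤ (d : ℝ) := by exact_mod_cast hd
    have hn' : (1 : ℝ) ≤ (n : ℝ) := by exact_mod_cast hn
    have h3 : Ψ ≤ ((r₀ : ℤ) : ℝ) ^ 2 := by
      rw [hΨdef, hr₀def]
      push_cast
      have e1 : ((n:ℝ) - 1) ^ 2 ≤ (n:ℝ) ^ 2 := by nlinarith
      have hd' : (1:ℝ) ≤ (d:ℝ) := by exact_mod_cast hd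
      have hn' : (1:ℝ) ≤ (n:ℝ) := by exact_mod_cast hn
      have e2 : (n:ℝ) * ((d:ℝ) * ((n:ℝ) - 1) ^ 2) ≤ (d:ℝ) * (n:ℝ) ^ 3 := by
        nlinarith [mul_le_mul_of_nonneg_left e1 (show (0:ℝ) ≤ (n:ℝ) * (d:ℝ) by positivity)]
      have e3 : (d:ℝ) * (n:ℝ) ^ 3 ≤ ((d:ℝ) * (n:ℝ) ^ 2) ^ 2 := by
        have e4 : (0:ℝ) ≤ (d:ℝ) * (n:ℝ) ^ 3 := by positivity
        have e5 : (0:ℝ) ≤ (d:ℝ) * (n:ℝ) - 1 := by nlinarith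
        nlinarith [mul_nonneg e4 e5]
      linarith
    by_contra hc
    push_neg at hc
    have h4 : ((r₀ : ℤ) : ℝ) + 1 ≤ |(u j : ℝ)| := by
      have h5 : r₀ + 1 ≤ |u j| := hc
      have h6 : ((r₀ + 1 : ℤ) : ℝ) ≤ ((|u j| : ℤ) : ℝ) := by exact_mod_cast h5
      rw [Int.cast_abs] at h6
      push_cast at h6
      linarith
    have hr₀' : (1 : ℝ) ≤ ((r₀ : ℤ) : ℝ) := by exact_mod_cast hr₀1
    have h7 := sq_abs ((u j : ℝ))
    nlinarith
  have horth : Orthoconvex d A₀ := by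
    by_contra hno
    rw [Orthoconvex] at hno
    push_neg at hno
    obtain ⟨x, hxA, i, k, hk, hxk, j, hj0, hjk, hhole⟩ := hno
    set S : Finset ℤ := (Finset.Icc 1 (k - 1)).filter
      (fun c => x + c • unitVec d i ∉ A₀) with hS
    have hjS : j ∈ S := by
      rw [hS, Finset.mem_filter, Finset.mem_Icc]
      exact ⟨⟨by omega, by omega⟩, hhole⟩
    have hSne : S.Nonempty := ⟨j, hjS⟩
    set cp := S.max' hSne with hcp
    set cm := S.min' hSne with hcm
    have hcpS' := S.max'_mem hSne
    have hcmS' := S.min'_mem hSne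
    rw [← hcp] at hcpS'
    rw [← hcm] at hcmS'
    have hcmcp : cm ≤ cp := by
      rw [hcm]
      exact S.min'_le _ hcpS'
    rw [hS, Finset.mem_filter, Finset.mem_Icc] at hcpS' hcmS'
    have hcpA : x + (cp + 1) • unitVec d i ∈ A₀ := by
      rcases eq_or_lt_of_le hcpS'.1.2 with heq | hlt
      · rw [show cp + 1 = k by omega]
        exact hxk
      · by_contra hcon
        have hmem : cp + 1 ∈ S := by
          rw [hS, Finset.mem_filter, Finset.mem_Icc]
          exact ⟨⟨by omega, by omega⟩, hcon⟩
        have := S.le_max' _ hmem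
        omega
    have hcmA : x + (cm - 1) • unitVec d i ∈ A₀ := by
      rcases eq_or_lt_of_le hcmS'.1.1 with heq | hlt
      · have hzero : x + (cm - 1) • unitVec d i = x := by
          rw [show cm - 1 = 0 by omega]
          funext j'
          rw [smul_unitVec_apply]
          split <;> ring
        rw [hzero]
        exact hxA
      · by_contra hcon
        have hmem : cm - 1 ∈ S := by
          rw [hS, Finset.mem_filter, Finset.mem_Icc]
          exact ⟨⟨by omega, by omega⟩, hcon⟩
        have := S.min'_le _ hmem
        omega
    have hxb : -r₀ ≤ x i ∧ x i ≤ r₀ := abs_le.mp (hcoord x hxA i)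
    have hxkb : -r₀ ≤ x i + k ∧ x i + k ≤ r₀ := by
      have := hcoord _ hxk i
      rw [smul_unitVec_apply, if_pos rfl] at this
      exact abs_le.mp this
    rcases le_or_gt 0 (x i + cp) with hsgn | hsgn
    · -- polarize towards the lower side at level x i + cp
      set ℓ := x i + cp with hℓ
      have hwit : ∃ p ∈ A₀, ℓ + 1 ≤ p i ∧ pmap i ℓ p ∉ A₀ := by
        refine ⟨x + (cp + 1) • unitVec d i, hcpA, ?_, ?_⟩
        · rw [smul_unitVec_apply, if_pos rfl]
          omega
        · have hpm : pmap i ℓ (x + (cp + 1) • unitVec d i) = x + cp • unitVec d i := by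
            funext j'
            rcases eq_or_ne j' i with rfl | hj'
            · rw [pmap_self, smul_unitVec_apply, if_pos rfl, smul_unitVec_apply, if_pos rfl]
              omega
            · rw [pmap_ne _ _ _ hj', smul_unitVec_apply, if_neg hj',
                smul_unitVec_apply, if_neg hj']
          rw [hpm]
          exact hcpS'.2
      set A₁ := polar i ℓ A₀ with hA₁
      have hψlt : psi A₁ < psi A₀ := polar_psi hA₀fin hsgn hwit
      have hup : ebar d A₀ ≤ ebar d A₁ := polar_ebar hd i ℓ hA₀fin
      have hℓb : 0 ≤ ℓ ∧ ℓ ≤ r₀ := by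
        constructor
        · exact hsgn
        · have h1 := hcpS'.1.2
          linarith [hxkb.2]
      have hA₁box : A₁ ⊆ ibox d R := by
        rintro z ⟨u, hu, rfl⟩
        unfold pmove
        split
        · intro j'
          rcases eq_or_ne j' i with rfl | hj'
          · rw [pmap_self]
            have h1 := abs_le.mp (hcoord u hu j')
            rw [abs_le, hRdef]
            constructor <;> linarith [hℓb.1, hℓb.2]
          · rw [pmap_ne _ _ _ hj']
            have h1 := abs_le.mp (hcoord u hu j')
            rw [abs_le, hRdef]
            constructor <;> linarith [hr₀1]
        · intro j'
          have h1 := abs_le.mp (hcoord u hu j')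
          rw [abs_le, hRdef]
          constructor <;> linarith [hr₀1]
      have hA₁mem𝒜 : A₁ ∈ 𝒜 := by
        refine ⟨⟨hA₁box, polar_nonempty hA₀ne⟩, ?_, polar_finite hA₀fin⟩
        rw [hA₁, polar_ncard hA₀fin]
        exact hA₀card
      have hA₁ebar : ebar d A₁ = M :=
        le_antisymm (hmax𝒜 _ hA₁mem𝒜) (by rw [← hA₀ebar]; exact hup)
      have hA₁mem : A₁ ∈ 𝒜M := ⟨hA₁mem𝒜, hA₁ebar, by linarith⟩
      have := hA₀min A₁ hA₁mem
      linarith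
    · -- flip the i-th coordinate and polarize
      have hsgn' : x i + cm < 0 := by omega
      set B := flipMap i ⁻¹' A₀ with hB
      have hBfin : B.Finite := hA₀fin.preimage (flipMap_bij i).1.injOn
      have hBne : B.Nonempty := by
        refine ⟨flipMap i x, ?_⟩
        show flipMap i (flipMap i x) ∈ A₀
        rw [flipMap_invol]
        exact hxA
      have hBcard : B.ncard = A₀.ncard := ncard_flip i A₀
      have hBψ : psi B = psi A₀ := psi_flip i hA₀fin
      have hBebar : ebar d B = M := by
        rw [hB, ebar_flip hd i hA₀fin]
        exact hA₀ebar
      have hflipi : ∀ z : Site d, flipMap i z i = -(z i) := fun z => by simp [flipMap]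
      have hflipo : ∀ (z : Site d) (j' : Fin d), j' ≠ i → flipMap i z j' = z j' :=
        fun z j' h => by simp [flipMap, h]
      have hBcoord : ∀ u ∈ B, ∀ j', |u j'| ≤ r₀ := by
        intro u hu j'
        have h := hcoord (flipMap i u) hu j'
        by_cases hj : j' = i
        · rw [hj] at h ⊢
          rw [hflipi, abs_neg] at h
          exact h
        · rw [hflipo u j' hj] at h
          exact h
      set ℓ := -(x i + cm) with hℓ
      have hsgnℓ : 0 ≤ ℓ := by omega
      set p := flipMap i (x + (cm - 1) • unitVec d i) with hp
      have hpB : p ∈ B := by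
        show flipMap i p ∈ A₀
        rw [hp, flipMap_invol]
        exact hcmA
      have hpi : p i = ℓ + 1 := by
        rw [hp, hflipi, smul_unitVec_apply, if_pos rfl]
        omega
      have hpmapp : pmap i ℓ p = flipMap i (x + cm • unitVec d i) := by
        funext j'
        by_cases hj' : j' = i
        · rw [hj', pmap_self, hpi, hflipi, smul_unitVec_apply, if_pos rfl]
          omega
        · rw [pmap_ne _ _ _ hj', hp, hflipo _ _ hj', hflipo _ _ hj',
            smul_unitVec_apply, if_neg hj', smul_unitVec_apply, if_neg hj']
      have hwitB : ∃ p' ∈ B, ℓ + 1 ≤ p' i ∧ pmap i ℓ p' ∉ B := by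
        refine ⟨p, hpB, le_of_eq hpi.symm, ?_⟩
        rw [hpmapp]
        intro hcon
        rw [hB, Set.mem_preimage, flipMap_invol] at hcon
        exact hcmS'.2 hcon
      set A₂ := polar i ℓ B with hA₂
      set A₁ := flipMap i ⁻¹' A₂ with hA₁
      have hA₂fin : A₂.Finite := polar_finite hBfin
      have hψ2 : psi A₂ < psi B := polar_psi hBfin hsgnℓ hwitB
      have hup2 : ebar d B ≤ ebar d A₂ := polar_ebar hd i ℓ hBfin
      have hψ1 : psi A₁ = psi A₂ := psi_flip i hA₂fin
      have hebar1 : ebar d A₁ = ebar d A₂ := ebar_flip hd i hA₂fin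
      have hℓb : ℓ ≤ r₀ := by
        have := hcmS'.1.1
        omega
      have hA₂box : A₂ ⊆ ibox d R := by
        rintro z ⟨u, hu, rfl⟩
        unfold pmove
        split
        · intro j'
          rcases eq_or_ne j' i with rfl | hj'
          · rw [pmap_self]
            have h1 := abs_le.mp (hBcoord u hu j')
            rw [abs_le, hRdef]
            constructor <;> linarith
          · rw [pmap_ne _ _ _ hj']
            have h1 := abs_le.mp (hBcoord u hu j')
            rw [abs_le, hRdef]
            constructor <;> linarith [hr₀1]
        · intro j'
          have h1 := abs_le.mp (hBcoord u hu j')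
          rw [abs_le, hRdef]
          constructor <;> linarith [hr₀1]
      have hA₁box : A₁ ⊆ ibox d R := by
        intro z hz
        have h1 : flipMap i z ∈ ibox d R := hA₂box hz
        have h2 := flip_mem_ibox i h1
        rwa [flipMap_invol] at h2
      have hA₁ne : A₁.Nonempty := by
        obtain ⟨w, hw⟩ := polar_nonempty (i := i) (ℓ := ℓ) hBne
        refine ⟨flipMap i w, ?_⟩
        show flipMap i (flipMap i w) ∈ A₂
        rw [flipMap_invol]
        exact hw
      have hA₁card : A₁.ncard ≤ n := by
        rw [hA₁, ncard_flip, hA₂, polar_ncard hBfin, hBcard]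
        exact hA₀card
      have hA₁fin : A₁.Finite := hA₂fin.preimage (flipMap_bij i).1.injOn
      have hA₁mem𝒜 : A₁ ∈ 𝒜 := ⟨⟨hA₁box, hA₁ne⟩, hA₁card, hA₁fin⟩
      have hA₁ebar : ebar d A₁ = M := by
        apply le_antisymm (hmax𝒜 _ hA₁mem𝒜)
        rw [hebar1]
        calc M = ebar d B := hBebar.symm
        _ ≤ ebar d A₂ := hup2
      have hA₁mem : A₁ ∈ 𝒜M := by
        refine ⟨hA₁mem𝒜, hA₁ebar, ?_⟩
        rw [hψ1]
        linarith
      have := hA₀min A₁ hA₁mem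
      linarith [hψ1, hψ2, hBψ]
  obtain ⟨A, hAfin, hAcard, hAorth, hA₀A⟩ := padding hd n hA₀fin hA₀ne hA₀card horth
  refine ⟨A, hAfin, hAcard, hAorth, ?_⟩
  intro A' hA' hcard'
  calc ebar d A' ≤ M := hupper A' hA' (le_of_eq hcard')
  _ = ebar d A₀ := hA₀ebar.symm
  _ ≤ ebar d A := ebar_mono hd hA₀fin hAfin hA₀A

theorem lemma_orthoconvex (d n : ℕ) (hd : 1 ≤ d) (hn : 1 ≤ n) :
    ∃ A : Set (Site d), A.Finite ∧ A.ncard = n ∧ Orthoconvex d A ∧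
      ∀ A' : Set (Site d), A'.Finite → A'.ncard = n → ebar d A' ≤ ebar d A := by
  exact lemma_orthoconvex' d n hd hn

end RotorRouterPaper
end
end
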